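/- arXiv:2603.27845 — 10 statements merged into one kernel-verified Lean document; each statement's English description precedes it below -/
import Mathlib

section
/- Consider the Watts–Strogatz mean-field system with inertia δ = 0. Suppose the Case-1 condition p·(α+β)·max{r, 1−r} < α holds, and let c be a real number with 1/2 < c ≤ 1. Then every solution θ = (θ^B, θ^R) of the system on [0, ∞) with θ^B(0) = θ^R(0) = c satisfies θ(t) → (1, 1) as t → ∞ (consensus on the initially more popular choice). -/
open Set Filter

/-- `g^B(θ) = α(1−pr)(2θ^B−1) − βpr(2θ^R−1)`. -/
noncomputable def gB (α β p r θB θR : ℝ) : ℝ :=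
  α * (1 - p * r) * (2 * θB - 1) - β * p * r * (2 * θR - 1)

/-- `g^R(θ) = α(1−p(1−r))(2θ^R−1) − β(1−r)p(2θ^B−1)`. -/
noncomputable def gR (α β p r θB θR : ℝ) : ℝ :=
  α * (1 - p * (1 - r)) * (2 * θR - 1) - β * (1 - r) * p * (2 * θB - 1)

/-- Right-hand side of the blue equation:
`(1−θ^B)·𝟙[g^B(θ) > 0] − θ^B·𝟙[g^B(θ) < 0]`. -/
noncomputable def rhsB (α β p r θB θR : ℝ) : ℝ :=
  (1 - θB) * (if 0 < gB α β p r θB θR then 1 else 0)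
    - θB * (if gB α β p r θB θR < 0 then 1 else 0)

/-- Right-hand side of the red equation:
`(1−θ^R)·𝟙[g^R(θ) > 0] − θ^R·𝟙[g^R(θ) < 0]`. -/
noncomputable def rhsR (α β p r θB θR : ℝ) : ℝ :=
  (1 - θR) * (if 0 < gR α β p r θB θR then 1 else 0)
    - θR * (if gR α β p r θB θR < 0 then 1 else 0)

/-- `θ = (θ^B, θ^R)` is a solution of the Watts–Strogatz mean-field system
(with inertia `δ = 0`) on the set `J`: it is differentiable on `J` and satisfies
the two differential equations at every `t ∈ J`. -/
def IsWSSolutionOn (α β p r : ℝ) (θB θR : ℝ → ℝ) (J : Set ℝ) : Prop :=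
  ∀ t ∈ J,
    HasDerivWithinAt θB (rhsB α β p r (θB t) (θR t)) J t ∧
    HasDerivWithinAt θR (rhsR α β p r (θB t) (θR t)) J t

lemma continuous_gB_aux (α β p r : ℝ) : Continuous (fun q : ℝ × ℝ => gB α β p r q.1 q.2) := by
  unfold gB; fun_prop

lemma continuous_gR_aux (α β p r : ℝ) : Continuous (fun q : ℝ × ℝ => gR α β p r q.1 q.2) := by
  unfold gR; fun_prop

lemma local_unique (f g : ℝ → ℝ) (a b : ℝ)
    (hfc : ContinuousOn f (Icc a b)) (hgc : ContinuousOn g (Icc a b))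
    (hf : ∀ s ∈ Ico a b, HasDerivWithinAt f (1 - f s) (Ici s) s)
    (hg : ∀ s ∈ Ico a b, HasDerivWithinAt g (1 - g s) (Ici s) s)
    (h0 : f a = g a) : ∀ x ∈ Icc a b, f x = g x := by
  have key : ∀ x ∈ Icc a b,
      Real.exp x * (f x - g x) = Real.exp a * (f a - g a) := by
    apply constant_of_has_deriv_right_zero
    · exact (Real.continuous_exp.continuousOn).mul (hfc.sub hgc)
    · intro x hx
      have hd : HasDerivWithinAt (fun s => Real.exp s * (f s - g s))
          (Real.exp x * (f x - g x) + Real.exp x * ((1 - f x) - (1 - g x)))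
          (Ici x) x :=
        ((Real.hasDerivAt_exp x).hasDerivWithinAt).mul ((hf x hx).sub (hg x hx))
      refine hd.congr_deriv ?_
      ring
  intro x hx
  have hz : Real.exp x * (f x - g x) = 0 := by rw [key x hx, h0]; ring
  rcases mul_eq_zero.mp hz with h | h
  · exact absurd h (Real.exp_pos x).ne'
  · linarith

lemma diag_pos (α β p r : ℝ) (hα : α ∈ Set.Icc (0:ℝ) 1) (hβ : β ∈ Set.Icc (0:ℝ) 1)
    (hp : p ∈ Set.Icc (0:ℝ) 1)
    (hcase : p * (α + β) * max r (1 - r) < α)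
    (x y : ℝ) (hx : 1/2 < x) (hy : x = y) :
    0 < gB α β p r x y ∧ 0 < gR α β p r x y := by
  subst hy
  have hab : 0 ≤ p * (α + β) := by
    have := hα.1; have := hβ.1; have := hp.1; positivity
  have h1 : p * (α + β) * r ≤ p * (α + β) * max r (1 - r) :=
    mul_le_mul_of_nonneg_left (le_max_left _ _) hab
  have h2 : p * (α + β) * (1 - r) ≤ p * (α + β) * max r (1 - r) :=
    mul_le_mul_of_nonneg_left (le_max_right _ _) hab
  constructor
  · have hgb : gB α β p r x x = (2 * x - 1) * (α - p * (α + β) * r) := by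
      unfold gB; ring
    rw [hgb]; exact mul_pos (by linarith) (by linarith)
  · have hgr : gR α β p r x x = (2 * x - 1) * (α - p * (α + β) * (1 - r)) := by
      unfold gR; ring
    rw [hgr]; exact mul_pos (by linarith) (by linarith)

lemma rhsB_of_pos {α β p r θB θR : ℝ} (h : 0 < gB α β p r θB θR) :
    rhsB α β p r θB θR = 1 - θB := by
  unfold rhsB; rw [if_pos h, if_neg (by linarith)]; ring

lemma rhsR_of_pos {α β p r θB θR : ℝ} (h : 0 < gR α β p r θB θR) :
    rhsR α β p r θB θR = 1 - θR := by
  unfold rhsR; rw [if_pos h, if_neg (by linarith)]; ring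

/-- Under the Case-1 condition `p(α+β)max{r,1−r} < α` and party-independent
initial condition `θ^B(0) = θ^R(0) = c` with `1/2 < c ≤ 1`, every solution of the
Watts–Strogatz mean-field system on `[0,∞)` converges to the consensus state `(1,1)`. -/
theorem ws_case1_consensus_to_one
    (α β p r : ℝ)
    (hα : α ∈ Set.Icc (0:ℝ) 1) (hβ : β ∈ Set.Icc (0:ℝ) 1)
    (hp : p ∈ Set.Icc (0:ℝ) 1) (hr : r ∈ Set.Ioo (0:ℝ) 1)
    (hcase : p * (α + β) * max r (1 - r) < α)
    (c : ℝ) (hc1 : 1 / 2 < c) (hc2 : c ≤ 1)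
    (θB θR : ℝ → ℝ)
    (hsol : IsWSSolutionOn α β p r θB θR (Set.Ici 0))
    (h0B : θB 0 = c) (h0R : θR 0 = c) :
    Filter.Tendsto (fun t => (θB t, θR t)) Filter.atTop (nhds ((1:ℝ), (1:ℝ))) := by
  set ψ : ℝ → ℝ := fun t => 1 - (1 - c) * Real.exp (-t) with hψdef
  -- basic facts about ψ
  have hψd : ∀ t : ℝ, HasDerivAt ψ (1 - ψ t) t := by
    intro t
    have h1 : HasDerivAt (fun t : ℝ => Real.exp (-t)) (Real.exp (-t) * (-1)) t :=
      ((hasDerivAt_id t).neg).exp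
    have h2 := (h1.const_mul (1 - c)).const_sub 1
    refine h2.congr_deriv ?_
    simp only [hψdef]
    ring
  have hψmem : ∀ t : ℝ, 0 ≤ t → 1/2 < ψ t ∧ ψ t ≤ 1 := by
    intro t ht
    have he1 : Real.exp (-t) ≤ 1 := Real.exp_le_one_iff.mpr (by linarith)
    have he0 : 0 < Real.exp (-t) := Real.exp_pos _
    constructor
    · simp only [hψdef]; nlinarith
    · simp only [hψdef]; nlinarith
  have hψ0 : ψ 0 = c := by simp [hψdef]
  have hψc : Continuous ψ := by
    simp only [hψdef]; continuity
  -- continuity of the solution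
  have hθBc : ContinuousOn θB (Ici 0) := fun t ht => ((hsol t ht).1).continuousWithinAt
  have hθRc : ContinuousOn θR (Ici 0) := fun t ht => ((hsol t ht).2).continuousWithinAt
  -- local extension
  have ext : ∀ t₀ : ℝ, 0 ≤ t₀ → θB t₀ = ψ t₀ → θR t₀ = ψ t₀ →
      ∃ ε > 0, ∀ s ∈ Icc t₀ (t₀ + ε), θB s = ψ s ∧ θR s = ψ s := by
    intro t₀ ht₀ hBe hRe
    set G : ℝ → ℝ := fun s => min (gB α β p r (θB s) (θR s)) (gR α β p r (θB s) (θR s))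
      with hGdef
    have hgBcc : ContinuousOn (fun s => gB α β p r (θB s) (θR s)) (Ici 0) :=
      (continuous_gB_aux α β p r).comp_continuousOn (hθBc.prodMk hθRc)
    have hgRcc : ContinuousOn (fun s => gR α β p r (θB s) (θR s)) (Ici 0) :=
      (continuous_gR_aux α β p r).comp_continuousOn (hθBc.prodMk hθRc)
    have hGc : ContinuousOn G (Ici 0) := hgBcc.inf hgRcc
    have hGpos : 0 < G t₀ := by
      have := diag_pos α β p r hα hβ hp hcase (θB t₀) (θR t₀)
        (by rw [hBe]; exact (hψmem t₀ ht₀).1) (by rw [hBe, hRe])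
      exact lt_min this.1 this.2
    have hev : ∀ᶠ s in nhdsWithin t₀ (Ici 0), 0 < G s :=
      (hGc t₀ ht₀).eventually (eventually_gt_nhds hGpos)
    obtain ⟨δ, hδ, hball⟩ := Metric.mem_nhdsWithin_iff.mp hev
    refine ⟨δ / 2, by linarith, ?_⟩
    have hsub : Icc t₀ (t₀ + δ / 2) ⊆ Ici 0 := fun s hs => le_trans ht₀ hs.1
    have hGposOn : ∀ s ∈ Icc t₀ (t₀ + δ / 2), 0 < G s := by
      intro s hs
      refine hball ⟨Metric.mem_ball.mpr ?_, hsub hs⟩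
      rw [Real.dist_eq, abs_lt]
      constructor
      · linarith [hs.1, hs.2]
      · linarith [hs.1, hs.2]
    have hB : ∀ x ∈ Icc t₀ (t₀ + δ / 2), θB x = ψ x := by
      apply local_unique _ _ _ _ (hθBc.mono hsub) (hψc.continuousOn)
      · intro s hs
        have hs' : s ∈ Icc t₀ (t₀ + δ / 2) := ⟨hs.1, le_of_lt hs.2⟩
        have hpos : 0 < gB α β p r (θB s) (θR s) :=
          lt_of_lt_of_le (hGposOn s hs') (min_le_left _ _)
        have hd := (hsol s (hsub hs')).1
        rw [rhsB_of_pos hpos] at hd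
        exact hd.mono (Ici_subset_Ici.mpr (hsub hs'))
      · intro s _
        exact (hψd s).hasDerivWithinAt
      · exact hBe
    have hR : ∀ x ∈ Icc t₀ (t₀ + δ / 2), θR x = ψ x := by
      apply local_unique _ _ _ _ (hθRc.mono hsub) (hψc.continuousOn)
      · intro s hs
        have hs' : s ∈ Icc t₀ (t₀ + δ / 2) := ⟨hs.1, le_of_lt hs.2⟩
        have hpos : 0 < gR α β p r (θB s) (θR s) :=
          lt_of_lt_of_le (hGposOn s hs') (min_le_right _ _)
        have hd := (hsol s (hsub hs')).2
        rw [rhsR_of_pos hpos] at hd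
        exact hd.mono (Ici_subset_Ici.mpr (hsub hs'))
      · intro s _
        exact (hψd s).hasDerivWithinAt
      · exact hRe
    exact fun s hs => ⟨hB s hs, hR s hs⟩
  -- global equality
  have hall : ∀ t : ℝ, 0 ≤ t → θB t = ψ t ∧ θR t = ψ t := by
    by_contra hcon
    push_neg at hcon
    set S : Set ℝ := {t | 0 ≤ t ∧ ¬(θB t = ψ t ∧ θR t = ψ t)} with hSdef
    have hne : S.Nonempty := by
      obtain ⟨t, ht, h⟩ := hcon
      exact ⟨t, ht, fun hh => h hh.1 hh.2⟩
    have hbdd : BddBelow S := ⟨0, fun t ht => ht.1⟩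
    set t₀ := sInf S with ht₀def
    have ht₀0 : 0 ≤ t₀ := le_csInf hne fun t ht => ht.1
    have heq_lt : ∀ s, 0 ≤ s → s < t₀ → θB s = ψ s ∧ θR s = ψ s := by
      intro s hs hlt
      by_contra h
      exact absurd (csInf_le hbdd ⟨hs, h⟩) (not_le.mpr hlt)
    have heqt₀ : θB t₀ = ψ t₀ ∧ θR t₀ = ψ t₀ := by
      rcases eq_or_lt_of_le ht₀0 with h0 | h0
      · rw [← h0]; rw [h0B, h0R, hψ0]; exact ⟨rfl, rfl⟩
      · -- continuity from the left
        have hcl : t₀ ∈ closure (Ico 0 t₀) := by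
          rw [closure_Ico (ne_of_lt h0)]; exact ⟨ht₀0, le_refl _⟩
        have hnb : (nhdsWithin t₀ (Ico 0 t₀)).NeBot :=
          mem_closure_iff_nhdsWithin_neBot.mp hcl
        have hsubI : Ico (0:ℝ) t₀ ⊆ Ici 0 := fun s hs => hs.1
        constructor
        · have htd : Tendsto θB (nhdsWithin t₀ (Ico 0 t₀)) (nhds (θB t₀)) :=
            (hθBc t₀ ht₀0).mono_left (nhdsWithin_mono _ hsubI)
          have htd' : Tendsto θB (nhdsWithin t₀ (Ico 0 t₀)) (nhds (ψ t₀)) := by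
            have : Tendsto ψ (nhdsWithin t₀ (Ico 0 t₀)) (nhds (ψ t₀)) :=
              (hψc.tendsto t₀).mono_left nhdsWithin_le_nhds
            refine this.congr' ?_
            filter_upwards [self_mem_nhdsWithin] with s hs
            exact ((heq_lt s hs.1 hs.2).1).symm
          exact tendsto_nhds_unique htd htd'
        · have htd : Tendsto θR (nhdsWithin t₀ (Ico 0 t₀)) (nhds (θR t₀)) :=
            (hθRc t₀ ht₀0).mono_left (nhdsWithin_mono _ hsubI)
          have htd' : Tendsto θR (nhdsWithin t₀ (Ico 0 t₀)) (nhds (ψ t₀)) := by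
            have : Tendsto ψ (nhdsWithin t₀ (Ico 0 t₀)) (nhds (ψ t₀)) :=
              (hψc.tendsto t₀).mono_left nhdsWithin_le_nhds
            refine this.congr' ?_
            filter_upwards [self_mem_nhdsWithin] with s hs
            exact ((heq_lt s hs.1 hs.2).2).symm
          exact tendsto_nhds_unique htd htd'
    obtain ⟨ε, hε, hext⟩ := ext t₀ ht₀0 heqt₀.1 heqt₀.2
    have hlb : t₀ + ε ≤ t₀ := by
      rw [ht₀def]
      apply le_csInf hne
      intro t ht
      by_contra hlt
      push_neg at hlt
      rcases lt_or_ge t t₀ with h | h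
      · exact ht.2 (heq_lt t ht.1 h)
      · exact ht.2 (hext t ⟨h, le_of_lt hlt⟩)
    linarith
  -- convergence
  have hψtend : Tendsto ψ atTop (nhds 1) := by
    have h1 : Tendsto (fun t : ℝ => Real.exp (-t)) atTop (nhds 0) :=
      Real.tendsto_exp_neg_atTop_nhds_zero
    have h2 := (h1.const_mul (1 - c)).const_sub 1
    simpa using h2
  have hBtend : Tendsto θB atTop (nhds 1) := by
    refine hψtend.congr' ?_
    filter_upwards [eventually_ge_atTop (0:ℝ)] with t ht
    exact ((hall t ht).1).symm
  have hRtend : Tendsto θR atTop (nhds 1) := by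
    refine hψtend.congr' ?_
    filter_upwards [eventually_ge_atTop (0:ℝ)] with t ht
    exact ((hall t ht).2).symm
  exact hBtend.prodMk_nhds hRtend
end

section
/- Consider the Watts–Strogatz mean-field system with inertia δ = 0. Suppose the Case-1 condition p·(α+β)·max{r, 1−r} < α holds, and let c be a real number with 0 ≤ c < 1/2. Then every solution θ = (θ^B, θ^R) of the system on [0, ∞) with θ^B(0) = θ^R(0) = c satisfies θ(t) → (0, 0) as t → ∞ (consensus on the initially more popular choice). -/
open Set Filter

/-- Under the Case-1 condition and initial condition θ^B(0)=θ^R(0)=c with 0 ≤ c < 1/2, every solution on [0,∞) converges to the consensus state (0,0). -/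
theorem ws_case1_consensus_to_zero
    (α β p r : ℝ)
    (hα : α ∈ Set.Icc (0:ℝ) 1) (hβ : β ∈ Set.Icc (0:ℝ) 1)
    (hp : p ∈ Set.Icc (0:ℝ) 1) (hr : r ∈ Set.Ioo (0:ℝ) 1)
    (hcase : p * (α + β) * max r (1 - r) < α)
    (c : ℝ) (hc1 : 0 ≤ c) (hc2 : c < 1 / 2)
    (θB θR : ℝ → ℝ)
    (hsol : IsWSSolutionOn α β p r θB θR (Set.Ici 0))
    (h0B : θB 0 = c) (h0R : θR 0 = c) :
    Filter.Tendsto (fun t => (θB t, θR t)) Filter.atTop (nhds (((0:ℝ), (0:ℝ)))) := by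
  -- basic positivity facts
  have hpab : 0 ≤ p * (α + β) := mul_nonneg hp.1 (add_nonneg hα.1 hβ.1)
  have hAr : p * (α + β) * r < α :=
    lt_of_le_of_lt (mul_le_mul_of_nonneg_left (le_max_left r (1 - r)) hpab) hcase
  have hAr' : p * (α + β) * (1 - r) < α :=
    lt_of_le_of_lt (mul_le_mul_of_nonneg_left (le_max_right r (1 - r)) hpab) hcase
  -- continuity of the solution
  have hcB : ContinuousOn θB (Ici 0) := fun t ht => ((hsol t ht).1).continuousWithinAt
  have hcR : ContinuousOn θR (Ici 0) := fun t ht => ((hsol t ht).2).continuousWithinAt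
  have hGB : ContinuousOn (fun t => gB α β p r (θB t) (θR t)) (Ici 0) := by
    unfold gB; fun_prop
  have hGR : ContinuousOn (fun t => gR α β p r (θB t) (θR t)) (Ici 0) := by
    unfold gR; fun_prop
  -- the key identity
  have key : ∀ t ∈ Ici (0:ℝ), θB t = c * Real.exp (-t) ∧ θR t = c * Real.exp (-t) := by
    intro T hT
    set S : Set ℝ := {t | θB t = c * Real.exp (-t) ∧ θR t = c * Real.exp (-t)} with hS
    have hTsub : Icc (0:ℝ) T ⊆ Ici 0 := Icc_subset_Ici_self
    have hclosed : IsClosed (S ∩ Icc 0 T) := by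
      have h1 : IsClosed (Icc (0:ℝ) T ∩ (fun t => (θB t - c * Real.exp (-t), θR t - c * Real.exp (-t))) ⁻¹' {((0:ℝ),(0:ℝ))}) := by
        apply ContinuousOn.preimage_isClosed_of_isClosed _ isClosed_Icc isClosed_singleton
        exact ((hcB.mono hTsub).sub (by fun_prop : ContinuousOn (fun t : ℝ => c * Real.exp (-t)) (Icc 0 T))).prodMk ((hcR.mono hTsub).sub (by fun_prop : ContinuousOn (fun t : ℝ => c * Real.exp (-t)) (Icc 0 T)))
      have : S ∩ Icc 0 T = Icc (0:ℝ) T ∩ (fun t => (θB t - c * Real.exp (-t), θR t - c * Real.exp (-t))) ⁻¹' {((0:ℝ),(0:ℝ))} := by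
        ext t
        simp only [hS, mem_inter_iff, mem_setOf_eq, mem_preimage, mem_singleton_iff, Prod.mk.injEq,
          sub_eq_zero]
        tauto
      rw [this]; exact h1
    have h0S : (0:ℝ) ∈ S := by
      constructor <;> simp [h0B, h0R]
    have hgt : ∀ x ∈ S ∩ Ico 0 T, ∀ y ∈ Ioi x, (S ∩ Ioc x y).Nonempty := by
      rintro x ⟨⟨hxB, hxR⟩, hx0, hxT⟩ y hy
      have hx0' : (0:ℝ) ≤ x := hx0
      -- the common value at x
      have hvlt : θB x < 1/2 := by
        rw [hxB]
        calc c * Real.exp (-x) ≤ c * 1 := by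
              apply mul_le_mul_of_nonneg_left _ hc1
              rw [Real.exp_le_one_iff]; linarith
          _ < 1/2 := by linarith
      have hvR : θR x = θB x := by rw [hxB, hxR]
      -- g's are negative at x
      have h2v : 2 * θB x - 1 < 0 := by linarith
      have hgBx : gB α β p r (θB x) (θR x) < 0 := by
        rw [hvR]
        have hpos : 0 < α * (1 - p * r) - β * p * r := by nlinarith [hAr]
        have : gB α β p r (θB x) (θB x) = (2 * θB x - 1) * (α * (1 - p * r) - β * p * r) := by
          unfold gB; ring
        rw [this]
        exact mul_neg_of_neg_of_pos h2v hpos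
      have hgRx : gR α β p r (θB x) (θR x) < 0 := by
        rw [hvR]
        have hpos : 0 < α * (1 - p * (1 - r)) - β * (1 - r) * p := by nlinarith [hAr']
        have : gR α β p r (θB x) (θB x) = (2 * θB x - 1) * (α * (1 - p * (1 - r)) - β * (1 - r) * p) := by
          unfold gR; ring
        rw [this]
        exact mul_neg_of_neg_of_pos h2v hpos
      -- neighborhood where both g's are negative
      have hxI : x ∈ Ici (0:ℝ) := hx0'
      have hmemB : (fun t => gB α β p r (θB t) (θR t)) ⁻¹' (Iio 0) ∈ nhdsWithin x (Ici 0) :=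
        (hGB x hxI) (Iio_mem_nhds hgBx)
      have hmemR : (fun t => gR α β p r (θB t) (θR t)) ⁻¹' (Iio 0) ∈ nhdsWithin x (Ici 0) :=
        (hGR x hxI) (Iio_mem_nhds hgRx)
      obtain ⟨ε, hε, hball⟩ := Metric.mem_nhdsWithin_iff.1 (Filter.inter_mem hmemB hmemR)
      -- the interval on which we propagate
      set η : ℝ := min (ε/2) (y - x) with hη
      have hηpos : 0 < η := lt_min (by linarith) (by simp at hy; linarith)
      set b : ℝ := x + η with hb
      have hxb : x < b := by simp [hb]; linarith
      have hsub : Icc x b ⊆ Metric.ball x ε ∩ Ici 0 := by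
        intro s hs
        constructor
        · rw [Metric.mem_ball, Real.dist_eq, abs_sub_lt_iff]
          constructor
          · have : s ≤ x + η := hs.2
            have : η ≤ ε/2 := min_le_left _ _
            linarith [hs.2, min_le_left (ε/2) (y-x)]
          · linarith [hs.1]
        · exact le_trans hx0' hs.1
      have hneg : ∀ s ∈ Icc x b, gB α β p r (θB s) (θR s) < 0 ∧ gR α β p r (θB s) (θR s) < 0 := by
        intro s hs
        have := hball (hsub hs)
        exact ⟨this.1, this.2⟩
      -- derivative of t ↦ θB t * exp t is zero on [x, b]
      have hderiv : ∀ (f : ℝ → ℝ), (∀ s, 0 ≤ s → gB α β p r (θB s) (θR s) < 0 →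
          HasDerivWithinAt f (-(f s)) (Ici 0) s) → True := fun _ _ => trivial
      -- handle θB
      have hconstB : ∀ s ∈ Icc x b, θB s * Real.exp s = θB x * Real.exp x := by
        apply constant_of_has_deriv_right_zero
        · exact (hcB.mono (fun s hs => le_trans hx0' hs.1)).mul (Real.continuous_exp.continuousOn)
        · intro s hs
          have hs' : s ∈ Icc x b := ⟨hs.1, le_of_lt hs.2⟩
          have hs0 : (0:ℝ) ≤ s := le_trans hx0' hs.1
          have hgneg := (hneg s hs').1
          have hd : HasDerivWithinAt θB (-(θB s)) (Ici 0) s := by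
            have := (hsol s hs0).1
            have heq : rhsB α β p r (θB s) (θR s) = -(θB s) := by
              unfold rhsB
              rw [if_neg (by linarith), if_pos hgneg]; ring
            rwa [heq] at this
          have hd' : HasDerivWithinAt θB (-(θB s)) (Ici s) s := hd.mono (Ici_subset_Ici.2 hs0)
          have := hd'.mul (Real.hasDerivAt_exp s).hasDerivWithinAt
          have hzero : -(θB s) * Real.exp s + θB s * Real.exp s = 0 := by ring
          rwa [hzero] at this
      have hconstR : ∀ s ∈ Icc x b, θR s * Real.exp s = θR x * Real.exp x := by
        apply constant_of_has_deriv_right_zero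
        · exact (hcR.mono (fun s hs => le_trans hx0' hs.1)).mul (Real.continuous_exp.continuousOn)
        · intro s hs
          have hs' : s ∈ Icc x b := ⟨hs.1, le_of_lt hs.2⟩
          have hs0 : (0:ℝ) ≤ s := le_trans hx0' hs.1
          have hgneg := (hneg s hs').2
          have hd : HasDerivWithinAt θR (-(θR s)) (Ici 0) s := by
            have := (hsol s hs0).2
            have heq : rhsR α β p r (θB s) (θR s) = -(θR s) := by
              unfold rhsR
              rw [if_neg (by linarith), if_pos hgneg]; ring
            rwa [heq] at this
          have hd' : HasDerivWithinAt θR (-(θR s)) (Ici s) s := hd.mono (Ici_subset_Ici.2 hs0)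
          have := hd'.mul (Real.hasDerivAt_exp s).hasDerivWithinAt
          have hzero : -(θR s) * Real.exp s + θR s * Real.exp s = 0 := by ring
          rwa [hzero] at this
      -- witness: b itself
      refine ⟨b, ⟨?_, ?_⟩, hxb, ?_⟩
      · have h1 := hconstB b ⟨le_of_lt hxb, le_refl b⟩
        rw [hxB] at h1
        have h2 : c * Real.exp (-x) * Real.exp x = c := by
          rw [Real.exp_neg]; field_simp
        rw [h2] at h1
        rw [Real.exp_neg]
        field_simp
        linarith [h1]
      · have h1 := hconstR b ⟨le_of_lt hxb, le_refl b⟩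
        rw [hxR] at h1
        have h2 : c * Real.exp (-x) * Real.exp x = c := by
          rw [Real.exp_neg]; field_simp
        rw [h2] at h1
        rw [Real.exp_neg]
        field_simp
        linarith [h1]
      · have hle : η ≤ y - x := min_le_right _ _
        simp only [hb]; linarith
    have := IsClosed.Icc_subset_of_forall_exists_gt hclosed h0S hgt
    exact this ⟨hT, le_refl T⟩
  -- conclude the limit
  have hlim : Tendsto (fun t => c * Real.exp (-t)) atTop (nhds 0) := by
    have h0 : Tendsto (fun t : ℝ => Real.exp (-t)) atTop (nhds 0) :=
      Real.tendsto_exp_neg_atTop_nhds_zero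
    simpa using h0.const_mul c
  have : Tendsto (fun t => ((c * Real.exp (-t), c * Real.exp (-t)) : ℝ × ℝ)) atTop (nhds ((0:ℝ),(0:ℝ))) :=
    hlim.prodMk_nhds hlim
  apply this.congr'
  filter_upwards [eventually_ge_atTop (0:ℝ)] with t ht
  obtain ⟨h1, h2⟩ := key t ht
  rw [h1, h2]
end

section
/- Consider the Watts–Strogatz mean-field system with inertia δ = 0. Suppose the Case-2 condition holds: p·(α+β)·r > α and p·(α+β)·(1−r) < α. Let c be a real number with 1/2 < c ≤ 1. Then every solution θ = (θ^B, θ^R) of the system on [0, ∞) with θ^B(0) = θ^R(0) = c satisfies θ(t) → (0, 1) as t → ∞ (party-line polarization, with the red group fully adopting the initially more popular choice and the blue group adopting the other choice). -/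
open Set Filter

/-- Under the Case-2 condition p(α+β)r > α and p(α+β)(1−r) < α, with θ^B(0)=θ^R(0)=c and 1/2 < c ≤ 1, every solution on [0,∞) converges to the party-line polarized state (0,1). -/
theorem ws_case2_polarization_high
    (α β p r : ℝ)
    (hα : α ∈ Set.Icc (0:ℝ) 1) (hβ : β ∈ Set.Icc (0:ℝ) 1)
    (hp : p ∈ Set.Icc (0:ℝ) 1) (hr : r ∈ Set.Ioo (0:ℝ) 1)
    (hcase1 : α < p * (α + β) * r) (hcase2 : p * (α + β) * (1 - r) < α)
    (c : ℝ) (hc1 : 1 / 2 < c) (hc2 : c ≤ 1)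
    (θB θR : ℝ → ℝ)
    (hsol : IsWSSolutionOn α β p r θB θR (Set.Ici 0))
    (h0B : θB 0 = c) (h0R : θR 0 = c) :
    Filter.Tendsto (fun t => (θB t, θR t)) Filter.atTop (nhds (((0:ℝ), (1:ℝ)))) := by
  obtain ⟨hα0, hα1⟩ := hα
  obtain ⟨hβ0, hβ1⟩ := hβ
  obtain ⟨hp0, hp1⟩ := hp
  obtain ⟨hr0, hr1⟩ := hr
  -- continuity of the solution
  have hcB : ContinuousOn θB (Ici 0) := fun t ht => (hsol t ht).1.continuousWithinAt
  have hcR : ContinuousOn θR (Ici 0) := fun t ht => (hsol t ht).2.continuousWithinAt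
  -- the explicit solution predicate
  set P : ℝ → Prop := fun t => θB t = c * Real.exp (-t) ∧ θR t = 1 - (1 - c) * Real.exp (-t)
    with hP
  -- sign lemma in the invariant region
  have hsign : ∀ u v : ℝ, u ≤ v → 1 / 2 < v →
      gB α β p r u v < 0 ∧ 0 < gR α β p r u v := by
    intro u v huv hv
    have hpr : p * r ≤ 1 := mul_le_one₀ hp1 hr0.le hr1.le
    have h1 : (0:ℝ) ≤ α * (1 - p * r) := mul_nonneg hα0 (by linarith)
    have h2 : (0:ℝ) ≤ β * p * r := by positivity
    have h3 : (0:ℝ) < 2 * v - 1 := by linarith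
    have h4 : α - p * r * (α + β) < 0 := by nlinarith
    have h5 : (0:ℝ) ≤ β * (1 - r) * p := by nlinarith
    have h6 : 0 < α - p * (1 - r) * (α + β) := by nlinarith
    constructor
    · unfold gB
      nlinarith [mul_nonneg h1 (by linarith : (0:ℝ) ≤ v - u), mul_pos h3 (by linarith : (0:ℝ) < p * r * (α + β) - α)]
    · unfold gR
      nlinarith [mul_nonneg h5 (by linarith : (0:ℝ) ≤ 2 * v - 1 - (2 * u - 1)), mul_pos h3 h6]
  -- continuity of g along the solution
  have hgBc : ContinuousOn (fun t => gB α β p r (θB t) (θR t)) (Ici 0) := by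
    unfold gB; fun_prop
  have hgRc : ContinuousOn (fun t => gR α β p r (θB t) (θR t)) (Ici 0) := by
    unfold gR; fun_prop
  have hall : ∀ t : ℝ, 0 ≤ t → P t := by
    intro b hb
    have key : Icc 0 b ⊆ {t | P t} := by
      apply IsClosed.Icc_subset_of_forall_exists_gt
      · -- closedness
        have : {t | P t} ∩ Icc 0 b =
            (Icc 0 b ∩ (fun t => θB t - c * Real.exp (-t)) ⁻¹' {0}) ∩
            (Icc 0 b ∩ (fun t => θR t - (1 - (1 - c) * Real.exp (-t))) ⁻¹' {0}) := by
          ext t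
          simp only [hP, mem_inter_iff, mem_setOf_eq, mem_preimage, mem_singleton_iff]
          constructor
          · rintro ⟨⟨e1, e2⟩, ht⟩; exact ⟨⟨ht, by rw [e1]; ring⟩, ht, by rw [e2]; ring⟩
          · rintro ⟨⟨ht, e1⟩, -, e2⟩; exact ⟨⟨by linarith, by linarith⟩, ht⟩
        rw [this]
        have hsub : Icc (0:ℝ) b ⊆ Ici 0 := Icc_subset_Ici_self
        exact ((((hcB.mono hsub).sub (by fun_prop)).preimage_isClosed_of_isClosed
            isClosed_Icc isClosed_singleton).inter
          (((hcR.mono hsub).sub (by fun_prop)).preimage_isClosed_of_isClosed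
            isClosed_Icc isClosed_singleton))
      · -- base case
        refine ⟨?_, ?_⟩ <;> simp [h0B, h0R]
      · -- inductive step
        rintro x ⟨hPx, hx0, hxb⟩ z hz
        obtain ⟨exB, exR⟩ := hPx
        have hE1 : Real.exp (-x) ≤ 1 := Real.exp_le_one_iff.2 (by linarith)
        have hE0 : 0 < Real.exp (-x) := Real.exp_pos _
        -- position in the invariant region
        have huv : θB x ≤ θR x := by
          rw [exB, exR]; nlinarith
        have hv : 1 / 2 < θR x := by
          rw [exR]; nlinarith [mul_nonneg (by linarith : (0:ℝ) ≤ 1 - c) (by linarith : (0:ℝ) ≤ 1 - Real.exp (-x))]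
        obtain ⟨hgBx, hgRx⟩ := hsign _ _ huv hv
        -- find a right neighborhood on which both sign conditions persist
        have hmem : {t | gB α β p r (θB t) (θR t) < 0 ∧ 0 < gR α β p r (θB t) (θR t)}
            ∈ nhdsWithin x (Ici x) := by
          have hx : x ∈ Ici (0:ℝ) := hx0
          have h1 : {t | gB α β p r (θB t) (θR t) < 0} ∈ nhdsWithin x (Ici 0) :=
            (hgBc x hx) (Iio_mem_nhds hgBx)
          have h2 : {t | 0 < gR α β p r (θB t) (θR t)} ∈ nhdsWithin x (Ici 0) :=
            (hgRc x hx) (Ioi_mem_nhds hgRx)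
          exact nhdsWithin_mono x (Ici_subset_Ici.2 hx0) (inter_mem h1 h2)
        obtain ⟨w, hxw, hIcc⟩ := mem_nhdsGE_iff_exists_Icc_subset.1 hmem
        set y := min w z with hy
        have hxy : x < y := lt_min hxw hz
        have hyz : y ≤ z := min_le_right _ _
        have hyw : y ≤ w := min_le_left _ _
        -- on [x,y] the ODE is linear; solve it
        have hsub0 : Icc x y ⊆ Ici (0:ℝ) := fun t ht => le_trans hx0 ht.1
        have hderivB : ∀ t ∈ Ico x y,
            HasDerivWithinAt (fun s => Real.exp s * θB s) 0 (Ici t) t := by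
          intro t ht
          have ht0 : (0:ℝ) ≤ t := le_trans hx0 ht.1
          have hsgn := hIcc ⟨ht.1, le_trans ht.2.le hyw⟩
          have hB := ((hsol t ht0).1).mono (Ici_subset_Ici.2 ht0)
          have hrhs : rhsB α β p r (θB t) (θR t) = -θB t := by
            unfold rhsB
            rw [if_neg (by exact fun h => absurd h (not_lt.2 hsgn.1.le)), if_pos hsgn.1]
            ring
          rw [hrhs] at hB
          have := ((Real.hasDerivAt_exp t).hasDerivWithinAt (s := Ici t)).mul hB
          refine this.congr_deriv ?_
          ring
        have hderivR : ∀ t ∈ Ico x y,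
            HasDerivWithinAt (fun s => Real.exp s * (θR s - 1)) 0 (Ici t) t := by
          intro t ht
          have ht0 : (0:ℝ) ≤ t := le_trans hx0 ht.1
          have hsgn := hIcc ⟨ht.1, le_trans ht.2.le hyw⟩
          have hR := ((hsol t ht0).2).mono (Ici_subset_Ici.2 ht0)
          have hrhs : rhsR α β p r (θB t) (θR t) = 1 - θR t := by
            unfold rhsR
            rw [if_pos hsgn.2, if_neg (by exact fun h => absurd h (not_lt.2 hsgn.2.le))]
            ring
          rw [hrhs] at hR
          have := ((Real.hasDerivAt_exp t).hasDerivWithinAt (s := Ici t)).mul (hR.sub_const 1)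
          refine this.congr_deriv ?_
          ring
        have hcontB : ContinuousOn (fun s => Real.exp s * θB s) (Icc x y) :=
          Real.continuous_exp.continuousOn.mul (hcB.mono hsub0)
        have hcontR : ContinuousOn (fun s => Real.exp s * (θR s - 1)) (Icc x y) :=
          Real.continuous_exp.continuousOn.mul ((hcR.mono hsub0).sub continuousOn_const)
        have hBy := constant_of_has_deriv_right_zero hcontB hderivB y ⟨hxy.le, le_refl y⟩
        have hRy := constant_of_has_deriv_right_zero hcontR hderivR y ⟨hxy.le, le_refl y⟩
        rw [exB] at hBy
        rw [exR] at hRy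
        have hEy : Real.exp y ≠ 0 := (Real.exp_pos y).ne'
        refine ⟨y, ⟨?_, ?_⟩, hxy, hyz⟩
        · have hxx : Real.exp x * Real.exp (-x) = 1 := by
            rw [← Real.exp_add]; simp
          have : Real.exp y * θB y = c := by
            rw [hBy]; linear_combination c * hxx
          rw [Real.exp_neg]
          field_simp at this ⊢
          linarith [this]
        · have hxx : Real.exp x * Real.exp (-x) = 1 := by
            rw [← Real.exp_add]; simp
          have : Real.exp y * (θR y - 1) = -(1 - c) := by
            rw [hRy]; linear_combination (-(1 - c)) * hxx
          have h2 : θR y - 1 = -(1 - c) * Real.exp (-y) := by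
            rw [Real.exp_neg]
            field_simp at this ⊢
            linarith [this]
          linarith [h2]
    exact key ⟨hb, le_refl b⟩
  -- conclude convergence
  have he : Tendsto (fun t : ℝ => Real.exp (-t)) atTop (nhds 0) :=
    Real.tendsto_exp_neg_atTop_nhds_zero
  have h1 : Tendsto (fun t : ℝ => c * Real.exp (-t)) atTop (nhds 0) := by
    simpa using he.const_mul c
  have h2 : Tendsto (fun t : ℝ => 1 - (1 - c) * Real.exp (-t)) atTop (nhds 1) := by
    have h3 : Tendsto (fun _ : ℝ => (1:ℝ)) atTop (nhds 1) := tendsto_const_nhds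
    simpa using h3.sub (he.const_mul (1 - c))
  refine (h1.prodMk_nhds h2).congr' ?_
  filter_upwards [eventually_ge_atTop (0:ℝ)] with t ht
  rw [(hall t ht).1, (hall t ht).2]
end

section
/- Consider the Watts–Strogatz mean-field system with inertia δ = 0. Suppose the Case-2 condition holds: p·(α+β)·r > α and p·(α+β)·(1−r) < α. Let c be a real number with 0 ≤ c < 1/2. Then every solution θ = (θ^B, θ^R) of the system on [0, ∞) with θ^B(0) = θ^R(0) = c satisfies θ(t) → (1, 0) as t → ∞ (party-line polarization, with the red group fully adopting the initially more popular choice and the blue group adopting the other choice). -/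
open Set Filter

lemma gB_pos_aux (α β p r x y : ℝ) (hα0 : 0 < α) (hβ0 : 0 < β) (hpr0 : 0 < p * r)
    (hpr1 : p * r < 1) (h1 : α < p * (α + β) * r) (hyx : y ≤ x) (hy : y < 1 / 2) :
    0 < gB α β p r x y := by
  unfold gB
  rcases le_or_gt (1 / 2) x with h | h
  · have h2 : 0 ≤ α * (1 - p * r) * (2 * x - 1) :=
      mul_nonneg (mul_nonneg hα0.le (by linarith)) (by linarith)
    have h3 : 0 < β * (p * r) := mul_pos hβ0 hpr0
    nlinarith [mul_pos h3 (show (0:ℝ) < 1 - 2 * y by linarith)]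
  · nlinarith [mul_pos (show (0:ℝ) < 1 - 2 * x by linarith)
        (show (0:ℝ) < p * (α + β) * r - α by linarith),
      mul_nonneg (mul_pos hβ0 hpr0).le (sub_nonneg.2 hyx)]

lemma gR_neg_aux (α β p r x y : ℝ) (hβ0 : 0 < β) (hp1r0 : 0 ≤ p * (1 - r))
    (h2 : p * (α + β) * (1 - r) < α) (hyx : y ≤ x) (hy : y < 1 / 2) :
    gR α β p r x y < 0 := by
  unfold gR
  nlinarith [mul_pos (show (0:ℝ) < 1 - 2 * y by linarith)
      (show (0:ℝ) < α - p * (α + β) * (1 - r) by linarith),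
    mul_nonneg (mul_nonneg hβ0.le hp1r0) (sub_nonneg.2 hyx)]

set_option maxHeartbeats 1000000 in
/-- Under the Case-2 condition p(α+β)r > α and p(α+β)(1−r) < α, with θ^B(0)=θ^R(0)=c and 0 ≤ c < 1/2, every solution on [0,∞) converges to the party-line polarized state (1,0). -/
theorem ws_case2_polarization_low
    (α β p r : ℝ)
    (hα : α ∈ Set.Icc (0:ℝ) 1) (hβ : β ∈ Set.Icc (0:ℝ) 1)
    (hp : p ∈ Set.Icc (0:ℝ) 1) (hr : r ∈ Set.Ioo (0:ℝ) 1)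
    (hcase1 : α < p * (α + β) * r) (hcase2 : p * (α + β) * (1 - r) < α)
    (c : ℝ) (hc1 : 0 ≤ c) (hc2 : c < 1 / 2)
    (θB θR : ℝ → ℝ)
    (hsol : IsWSSolutionOn α β p r θB θR (Set.Ici 0))
    (h0B : θB 0 = c) (h0R : θR 0 = c) :
    Filter.Tendsto (fun t => (θB t, θR t)) Filter.atTop (nhds (((1:ℝ), (0:ℝ)))) := by
  obtain ⟨hα0, hα1⟩ := hα
  obtain ⟨hβ0', hβ1⟩ := hβ
  obtain ⟨hp0, hp1⟩ := hp
  obtain ⟨hr0, hr1⟩ := hr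
  -- basic positivity facts
  have hα0' : 0 < α := by
    by_contra h
    push_neg at h
    have hα00 : α = 0 := le_antisymm h hα0
    rw [hα00] at hcase2
    nlinarith [mul_nonneg (mul_nonneg hp0 hβ0') (show (0:ℝ) ≤ 1 - r by linarith)]
  have hβ0 : 0 < β := by
    by_contra h
    push_neg at h
    have hβ00 : β = 0 := le_antisymm h hβ0'
    rw [hβ00] at hcase1
    nlinarith [mul_nonneg (mul_nonneg hp0 hα0) (show (0:ℝ) ≤ 1 - r by linarith),
      mul_nonneg hp0 hr0.le]
  have hpr0 : 0 < p * r := by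
    by_contra h
    push_neg at h
    nlinarith [mul_nonneg (neg_nonneg.2 h) (show (0:ℝ) ≤ α + β by linarith)]
  have hpr1' : p * r < 1 := by
    nlinarith [mul_nonneg (show (0:ℝ) ≤ 1 - p by linarith) hr0.le]
  have hp1r0 : 0 ≤ p * (1 - r) := mul_nonneg hp0 (by linarith)
  -- continuity of the solution
  have hcB : ContinuousOn θB (Ici 0) := fun t ht => ((hsol t ht).1).continuousWithinAt
  have hcR : ContinuousOn θR (Ici 0) := fun t ht => ((hsol t ht).2).continuousWithinAt
  -- the local extension step
  have step : ∀ x : ℝ, 0 ≤ x → θB x = 1 - (1 - c) * Real.exp (-x) →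
      θR x = c * Real.exp (-x) →
      ∃ ε > 0, ∀ t ∈ Icc x (x + ε),
        θB t = 1 - (1 - c) * Real.exp (-t) ∧ θR t = c * Real.exp (-t) := by
    intro x hx hBx hRx
    have hex1 : Real.exp (-x) ≤ 1 := by
      simpa using Real.exp_le_exp.2 (show -x ≤ (0:ℝ) by linarith)
    have hexpos := Real.exp_pos (-x)
    have hyx : θR x ≤ θB x := by rw [hBx, hRx]; nlinarith
    have hy2 : θR x < 1 / 2 := by rw [hRx]; nlinarith
    have hgBx : 0 < gB α β p r (θB x) (θR x) :=
      gB_pos_aux α β p r _ _ hα0' hβ0 hpr0 hpr1' hcase1 hyx hy2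
    have hgRx : gR α β p r (θB x) (θR x) < 0 :=
      gR_neg_aux α β p r _ _ hβ0 hp1r0 hcase2 hyx hy2
    -- continuity of the sign functions along the trajectory
    have hcgB : ContinuousWithinAt (fun t => gB α β p r (θB t) (θR t)) (Ici 0) x := by
      have h1 := hcB x hx
      have h2 := hcR x hx
      unfold gB
      exact (continuousWithinAt_const.mul
          ((continuousWithinAt_const.mul h1).sub continuousWithinAt_const)).sub
        (continuousWithinAt_const.mul
          ((continuousWithinAt_const.mul h2).sub continuousWithinAt_const))
    have hcgR : ContinuousWithinAt (fun t => gR α β p r (θB t) (θR t)) (Ici 0) x := by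
      have h1 := hcB x hx
      have h2 := hcR x hx
      unfold gR
      exact (continuousWithinAt_const.mul
          ((continuousWithinAt_const.mul h2).sub continuousWithinAt_const)).sub
        (continuousWithinAt_const.mul
          ((continuousWithinAt_const.mul h1).sub continuousWithinAt_const))
    have hev : ∀ᶠ t in nhdsWithin x (Ici 0),
        0 < gB α β p r (θB t) (θR t) ∧ gR α β p r (θB t) (θR t) < 0 :=
      (hcgB.eventually (eventually_gt_nhds hgBx)).and
        (hcgR.eventually (eventually_lt_nhds hgRx))
    rw [Filter.eventually_iff, Metric.mem_nhdsWithin_iff] at hev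
    obtain ⟨ε, hε, hsub⟩ := hev
    refine ⟨ε / 2, by positivity, ?_⟩
    have hsigns : ∀ t ∈ Icc x (x + ε / 2),
        0 < gB α β p r (θB t) (θR t) ∧ gR α β p r (θB t) (θR t) < 0 := by
      intro t ht
      refine hsub ⟨Metric.mem_ball.2 ?_, le_trans hx ht.1⟩
      rw [Real.dist_eq, abs_lt]
      constructor
      · linarith [ht.1]
      · linarith [ht.2]
    have hIsub : Icc x (x + ε / 2) ⊆ Ici 0 := fun t ht => le_trans hx ht.1
    -- derivative facts for the auxiliary functions e^t(θB−1) and e^t θR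
    have hFB : ∀ t ∈ Icc x (x + ε / 2),
        HasDerivWithinAt (fun s => Real.exp s * (θB s - 1)) 0 (Icc x (x + ε / 2)) t := by
      intro t ht
      have hd : HasDerivWithinAt θB (rhsB α β p r (θB t) (θR t)) (Icc x (x + ε / 2)) t :=
        ((hsol t (hIsub ht)).1).mono hIsub
      have hrhs : rhsB α β p r (θB t) (θR t) = 1 - θB t := by
        unfold rhsB
        rw [if_pos (hsigns t ht).1, if_neg (asymm (hsigns t ht).1)]
        ring
      rw [hrhs] at hd
      have hm : HasDerivWithinAt (fun s => Real.exp s * (θB s - 1))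
          (Real.exp t * (θB t - 1) + Real.exp t * (1 - θB t)) (Icc x (x + ε / 2)) t :=
        (Real.hasDerivAt_exp t).hasDerivWithinAt.mul (hd.sub_const 1)
      convert hm using 1
      ring
    have hFR : ∀ t ∈ Icc x (x + ε / 2),
        HasDerivWithinAt (fun s => Real.exp s * θR s) 0 (Icc x (x + ε / 2)) t := by
      intro t ht
      have hd : HasDerivWithinAt θR (rhsR α β p r (θB t) (θR t)) (Icc x (x + ε / 2)) t :=
        ((hsol t (hIsub ht)).2).mono hIsub
      have hrhs : rhsR α β p r (θB t) (θR t) = -θR t := by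
        unfold rhsR
        rw [if_neg (asymm (hsigns t ht).2), if_pos (hsigns t ht).2]
        ring
      rw [hrhs] at hd
      have hm : HasDerivWithinAt (fun s => Real.exp s * θR s)
          (Real.exp t * θR t + Real.exp t * -θR t) (Icc x (x + ε / 2)) t :=
        (Real.hasDerivAt_exp t).hasDerivWithinAt.mul hd
      convert hm using 1
      ring
    have hcontFB : ContinuousOn (fun s => Real.exp s * (θB s - 1)) (Icc x (x + ε / 2)) :=
      Real.continuous_exp.continuousOn.mul ((hcB.mono hIsub).sub continuousOn_const)
    have hcontFR : ContinuousOn (fun s => Real.exp s * θR s) (Icc x (x + ε / 2)) :=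
      Real.continuous_exp.continuousOn.mul (hcR.mono hIsub)
    have hderB : ∀ t ∈ Ico x (x + ε / 2),
        HasDerivWithinAt (fun s => Real.exp s * (θB s - 1)) 0 (Ici t) t := by
      intro t ht
      exact (hFB t (Ico_subset_Icc_self ht)).mono_of_mem_nhdsWithin
        (Filter.mem_of_superset (Icc_mem_nhdsGE_of_mem ⟨le_refl t, ht.2⟩)
          (Icc_subset_Icc_left ht.1))
    have hderR : ∀ t ∈ Ico x (x + ε / 2),
        HasDerivWithinAt (fun s => Real.exp s * θR s) 0 (Ici t) t := by
      intro t ht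
      exact (hFR t (Ico_subset_Icc_self ht)).mono_of_mem_nhdsWithin
        (Filter.mem_of_superset (Icc_mem_nhdsGE_of_mem ⟨le_refl t, ht.2⟩)
          (Icc_subset_Icc_left ht.1))
    have hconstB := constant_of_has_deriv_right_zero hcontFB hderB
    have hconstR := constant_of_has_deriv_right_zero hcontFR hderR
    intro t ht
    have h1 := hconstB t ht
    have h1R := hconstR t ht
    rw [hBx] at h1
    rw [hRx] at h1R
    have hxx : Real.exp x * Real.exp (-x) = 1 := by
      rw [← Real.exp_add]; simp
    have htt : Real.exp t * Real.exp (-t) = 1 := by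
      rw [← Real.exp_add]; simp
    have h2 : Real.exp t * (θB t - 1) = -(1 - c) := by
      linear_combination h1 - (1 - c) * hxx
    have h2R : Real.exp t * θR t = c := by
      linear_combination h1R + c * hxx
    constructor
    · linear_combination Real.exp (-t) * h2 - (θB t - 1) * htt
    · linear_combination Real.exp (-t) * h2R - θR t * htt
  -- real induction: the explicit solution formula holds for all t ≥ 0
  have key : ∀ b : ℝ, 0 ≤ b →
      θB b = 1 - (1 - c) * Real.exp (-b) ∧ θR b = c * Real.exp (-b) := by
    intro b hb
    set s : Set ℝ :=
      {t | θB t = 1 - (1 - c) * Real.exp (-t) ∧ θR t = c * Real.exp (-t)} with hs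
    have h0 : (0:ℝ) ∈ s := by
      refine ⟨?_, ?_⟩
      · rw [h0B, neg_zero, Real.exp_zero]; ring
      · rw [h0R, neg_zero, Real.exp_zero]; ring
    have hIb : Icc (0:ℝ) b ⊆ Ici 0 := Icc_subset_Ici_self
    have hclosed : IsClosed (s ∩ Icc 0 b) := by
      have heq : s ∩ Icc 0 b = Icc 0 b ∩
          ((fun t => (θB t - (1 - (1 - c) * Real.exp (-t)), θR t - c * Real.exp (-t)))
            ⁻¹' {((0:ℝ), (0:ℝ))}) := by
        ext t
        simp only [hs, mem_inter_iff, mem_setOf_eq, mem_preimage, mem_singleton_iff,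
          Prod.mk.injEq, sub_eq_zero]
        tauto
      rw [heq]
      have cexp : Continuous (fun t : ℝ => Real.exp (-t)) :=
        Real.continuous_exp.comp continuous_neg
      have c1 : ContinuousOn (fun t => θB t - (1 - (1 - c) * Real.exp (-t))) (Icc 0 b) :=
        (hcB.mono hIb).sub ((continuous_const.sub (continuous_const.mul cexp)).continuousOn)
      have c2 : ContinuousOn (fun t => θR t - c * Real.exp (-t)) (Icc 0 b) :=
        (hcR.mono hIb).sub ((continuous_const.mul cexp).continuousOn)
      exact ContinuousOn.preimage_isClosed_of_isClosed (c1.prodMk c2) isClosed_Icc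
        isClosed_singleton
    have hstep : ∀ x ∈ s ∩ Ico 0 b, ∀ y ∈ Ioi x, (s ∩ Ioc x y).Nonempty := by
      intro x hxmem y hy
      obtain ⟨⟨hBx, hRx⟩, hx0, _⟩ := hxmem
      obtain ⟨ε, hε, hall⟩ := step x hx0 hBx hRx
      refine ⟨min (x + ε) y, hall _ ⟨le_min (by linarith) hy.le, min_le_left _ _⟩,
        lt_min (by linarith) hy, min_le_right _ _⟩
    exact hclosed.Icc_subset_of_forall_exists_gt h0 hstep ⟨hb, le_refl b⟩
  -- take limits
  have hexp0 : Tendsto (fun t : ℝ => Real.exp (-t)) atTop (nhds 0) :=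
    Real.tendsto_exp_neg_atTop_nhds_zero
  have hBtend : Tendsto θB atTop (nhds 1) := by
    have h1 : Tendsto (fun t => 1 - (1 - c) * Real.exp (-t)) atTop (nhds 1) := by
      have h2 : Tendsto (fun t => 1 - (1 - c) * Real.exp (-t)) atTop
          (nhds (1 - (1 - c) * 0)) :=
        Tendsto.sub tendsto_const_nhds (Tendsto.mul tendsto_const_nhds hexp0)
      simpa using h2
    refine Tendsto.congr' ?_ h1
    filter_upwards [eventually_ge_atTop (0:ℝ)] with t ht
    exact ((key t ht).1).symm
  have hRtend : Tendsto θR atTop (nhds 0) := by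
    have h1 : Tendsto (fun t => c * Real.exp (-t)) atTop (nhds 0) := by
      have h2 : Tendsto (fun t => c * Real.exp (-t)) atTop (nhds (c * 0)) :=
        Tendsto.mul tendsto_const_nhds hexp0
      simpa using h2
    refine Tendsto.congr' ?_ h1
    filter_upwards [eventually_ge_atTop (0:ℝ)] with t ht
    exact ((key t ht).2).symm
  exact hBtend.prodMk_nhds hRtend
end

section
/- Consider the Watts–Strogatz mean-field system with inertia δ = 0. Suppose the Case-3 condition holds: p·(α+β)·(1−r) > α and p·(α+β)·r < α. Let c be a real number with 1/2 < c ≤ 1. Then every solution θ = (θ^B, θ^R) of the system on [0, ∞) with θ^B(0) = θ^R(0) = c satisfies θ(t) → (1, 0) as t → ∞ (party-line polarization, with the blue group fully adopting the initially more popular choice and the red group adopting the other choice). -/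
open Set Filter

/-- Under the Case-3 condition p(α+β)(1−r) > α and p(α+β)r < α, with θ^B(0)=θ^R(0)=c and 1/2 < c ≤ 1, every solution on [0,∞) converges to the party-line polarized state (1,0). -/
theorem ws_case3_polarization_high
    (α β p r : ℝ)
    (hα : α ∈ Set.Icc (0:ℝ) 1) (hβ : β ∈ Set.Icc (0:ℝ) 1)
    (hp : p ∈ Set.Icc (0:ℝ) 1) (hr : r ∈ Set.Ioo (0:ℝ) 1)
    (hcase1 : α < p * (α + β) * (1 - r)) (hcase2 : p * (α + β) * r < α)
    (c : ℝ) (hc1 : 1 / 2 < c) (hc2 : c ≤ 1)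
    (θB θR : ℝ → ℝ)
    (hsol : IsWSSolutionOn α β p r θB θR (Set.Ici 0))
    (h0B : θB 0 = c) (h0R : θR 0 = c) :
    Filter.Tendsto (fun t => (θB t, θR t)) Filter.atTop (nhds (((1:ℝ), (0:ℝ)))) := by
  obtain ⟨hα0, hα1⟩ := hα
  obtain ⟨hβ0, hβ1⟩ := hβ
  obtain ⟨hp0, hp1⟩ := hp
  obtain ⟨hr0, hr1⟩ := hr
  -- basic positivity
  have hp_pos : 0 < p := by
    nlinarith [mul_nonneg (add_nonneg hα0 hβ0) (by linarith : (0:ℝ) ≤ 1 - r)]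
  have hβ_pos : 0 < β := by
    nlinarith [mul_nonneg hp0 (by linarith : (0:ℝ) ≤ 1 - r),
      mul_nonneg (by linarith : (0:ℝ) ≤ 1 - p) hα0,
      mul_nonneg (mul_nonneg hα0 hp0) hr0.le]
  have hα_pos : 0 < α := by
    nlinarith [mul_pos (mul_pos hp_pos hβ_pos) hr0,
      mul_nonneg (mul_nonneg hp0 hα0) hr0.le]
  -- key sign facts about gB, gR in the invariant region
  have hgBpos : ∀ x y : ℝ, 1/2 < x → y ≤ x → 0 < gB α β p r x y := by
    intro x y hx hyx
    unfold gB
    nlinarith [mul_pos (mul_pos hβ_pos hp_pos) hr0,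
      mul_nonneg (mul_nonneg (mul_nonneg hβ0 hp0) hr0.le) (sub_nonneg.mpr hyx)]
  have hgRneg : ∀ x y : ℝ, 1/2 < x → y ≤ x → gR α β p r x y < 0 := by
    intro x y hx hyx
    have hA : 0 < 1 - p * (1 - r) := by nlinarith
    unfold gR
    nlinarith [mul_nonneg (mul_nonneg hα0 hA.le) (sub_nonneg.mpr hyx),
      mul_pos (mul_pos hα_pos hA) (show (0:ℝ) < 2*x - 1 by linarith)]
  -- continuity of the solution
  have hContB : ContinuousOn θB (Ici 0) := fun t ht => ((hsol t ht).1).continuousWithinAt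
  have hContR : ContinuousOn θR (Ici 0) := fun t ht => ((hsol t ht).2).continuousWithinAt
  -- auxiliary functions
  set f : ℝ → ℝ := fun t => Real.exp t * (θB t - 1) with hf
  set g : ℝ → ℝ := fun t => Real.exp t * θR t with hg
  -- the formulas for θB, θR at a "good" point
  have hformulaB : ∀ t : ℝ, f t = c - 1 → θB t = 1 - (1-c) * Real.exp (-t) := by
    intro t ht
    have he : Real.exp t ≠ 0 := (Real.exp_pos t).ne'
    rw [Real.exp_neg]
    field_simp
    simp only [hf] at ht
    nlinarith [ht]
  have hformulaR : ∀ t : ℝ, g t = c → θR t = c * Real.exp (-t) := by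
    intro t ht
    have he : Real.exp t ≠ 0 := (Real.exp_pos t).ne'
    rw [Real.exp_neg]
    field_simp
    simp only [hg] at ht
    linarith [ht]
  -- at a good point, we are in the invariant region
  have hregion : ∀ t : ℝ, 0 ≤ t → f t = c - 1 → g t = c →
      1/2 < θB t ∧ θR t ≤ θB t := by
    intro t ht hft hgt
    have hB := hformulaB t hft
    have hR := hformulaR t hgt
    have he0 : 0 < Real.exp (-t) := Real.exp_pos _
    have he1 : Real.exp (-t) ≤ 1 := Real.exp_le_one_iff.mpr (by linarith)
    constructor
    · rw [hB]; nlinarith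
    · rw [hB, hR]; nlinarith
  -- the main invariance claim via clopen argument on the connected subtype
  have key : ∀ t ∈ Ici (0:ℝ), f t = c - 1 ∧ g t = c := by
    haveI : ConnectedSpace (Ici (0:ℝ)) :=
      Subtype.connectedSpace ⟨nonempty_Ici, isPreconnected_Ici⟩
    set S : Set (Ici (0:ℝ)) := {x | f ↑x = c - 1 ∧ g ↑x = c} with hS
    have hfc : Continuous fun x : Ici (0:ℝ) => f ↑x := by
      exact (Real.continuous_exp.comp continuous_subtype_val).mul
        (hContB.restrict.sub continuous_const)
    have hgc : Continuous fun x : Ici (0:ℝ) => g ↑x := by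
      exact (Real.continuous_exp.comp continuous_subtype_val).mul hContR.restrict
    have hclosed : IsClosed S :=
      (isClosed_eq hfc continuous_const).inter (isClosed_eq hgc continuous_const)
    have hopen : IsOpen S := by
      rw [isOpen_iff_mem_nhds]
      rintro ⟨t₀, ht₀⟩ ⟨hft₀, hgt₀⟩
      obtain ⟨hhalf, hle⟩ := hregion t₀ ht₀ hft₀ hgt₀
      -- eventually both sign conditions hold along the trajectory
      have hcB : ContinuousWithinAt (fun s => gB α β p r (θB s) (θR s)) (Ici 0) t₀ := by
        have h1 := hContB t₀ ht₀
        have h2 := hContR t₀ ht₀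
        unfold gB
        exact ((continuousWithinAt_const.mul ((continuousWithinAt_const.mul h1).sub
          continuousWithinAt_const)).sub (continuousWithinAt_const.mul
          ((continuousWithinAt_const.mul h2).sub continuousWithinAt_const)))
      have hcR : ContinuousWithinAt (fun s => gR α β p r (θB s) (θR s)) (Ici 0) t₀ := by
        have h1 := hContB t₀ ht₀
        have h2 := hContR t₀ ht₀
        unfold gR
        exact ((continuousWithinAt_const.mul ((continuousWithinAt_const.mul h2).sub
          continuousWithinAt_const)).sub (continuousWithinAt_const.mul
          ((continuousWithinAt_const.mul h1).sub continuousWithinAt_const)))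
      have hev : ∀ᶠ s in nhdsWithin t₀ (Ici 0),
          0 < gB α β p r (θB s) (θR s) ∧ gR α β p r (θB s) (θR s) < 0 := by
        have e1 := hcB.eventually (eventually_gt_nhds (hgBpos _ _ hhalf hle))
        have e2 := hcR.eventually (eventually_lt_nhds (hgRneg _ _ hhalf hle))
        exact e1.and e2
      obtain ⟨ε, hε, hsub⟩ := Metric.mem_nhdsWithin_iff.mp hev
      set N : Set ℝ := Metric.ball t₀ ε ∩ Ici 0 with hN
      have hNsub : N ⊆ Ici 0 := inter_subset_right
      have hconv : Convex ℝ N := (convex_ball _ _).inter (convex_Ici _)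
      have ht₀N : t₀ ∈ N := ⟨Metric.mem_ball_self hε, ht₀⟩
      -- f has zero derivative on N
      have hdf : ∀ s ∈ N, HasDerivWithinAt f 0 N s := by
        intro s hs
        have hsgn := hsub hs
        have hDB : HasDerivWithinAt θB (rhsB α β p r (θB s) (θR s)) (Ici 0) s :=
          (hsol s hs.2).1
        have hval : rhsB α β p r (θB s) (θR s) = 1 - θB s := by
          unfold rhsB
          rw [if_pos hsgn.1, if_neg (asymm hsgn.1)]
          ring
        rw [hval] at hDB
        have hDB' := hDB.mono hNsub
        have hexp : HasDerivWithinAt Real.exp (Real.exp s) N s :=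
          (Real.hasDerivAt_exp s).hasDerivWithinAt
        have : HasDerivWithinAt (fun y => Real.exp y * (θB y - 1))
            (Real.exp s * (θB s - 1) + Real.exp s * (1 - θB s)) N s :=
          hexp.mul (hDB'.sub_const 1)
        convert this using 1
        ring
      have hdg : ∀ s ∈ N, HasDerivWithinAt g 0 N s := by
        intro s hs
        have hsgn := hsub hs
        have hDR : HasDerivWithinAt θR (rhsR α β p r (θB s) (θR s)) (Ici 0) s :=
          (hsol s hs.2).2
        have hval : rhsR α β p r (θB s) (θR s) = - θR s := by
          unfold rhsR
          rw [if_pos hsgn.2, if_neg (asymm hsgn.2)]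
          ring
        rw [hval] at hDR
        have hDR' := hDR.mono hNsub
        have hexp : HasDerivWithinAt Real.exp (Real.exp s) N s :=
          (Real.hasDerivAt_exp s).hasDerivWithinAt
        have : HasDerivWithinAt (fun y => Real.exp y * θR y)
            (Real.exp s * θR s + Real.exp s * (-θR s)) N s :=
          hexp.mul hDR'
        convert this using 1
        ring
      -- f and g are constant on N
      have hconstf : ∀ s ∈ N, f s = c - 1 := by
        intro s hs
        have := hconv.norm_image_sub_le_of_norm_hasDerivWithin_le
          (f' := fun _ => (0:ℝ)) (C := 0) hdf (fun x _ => by simp) ht₀N hs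
        simp only [zero_mul, norm_le_zero_iff, sub_eq_zero] at this
        rw [this, hft₀]
      have hconstg : ∀ s ∈ N, g s = c := by
        intro s hs
        have := hconv.norm_image_sub_le_of_norm_hasDerivWithin_le
          (f' := fun _ => (0:ℝ)) (C := 0) hdg (fun x _ => by simp) ht₀N hs
        simp only [zero_mul, norm_le_zero_iff, sub_eq_zero] at this
        rw [this, hgt₀]
      -- the preimage of the ball is contained in S
      refine Filter.mem_of_superset
        ((continuous_subtype_val.isOpen_preimage _ Metric.isOpen_ball).mem_nhds
          (by exact Metric.mem_ball_self hε)) ?_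
      rintro ⟨s, hs⟩ hball
      have hsN : s ∈ N := ⟨hball, hs⟩
      exact ⟨hconstf s hsN, hconstg s hsN⟩
    have hne : S.Nonempty := by
      refine ⟨⟨0, self_mem_Ici⟩, ?_, ?_⟩
      · simp [hf, h0B]
      · simp [hg, h0R]
    have huniv : S = univ := IsClopen.eq_univ ⟨hclosed, hopen⟩ hne
    intro t ht
    have : (⟨t, ht⟩ : Ici (0:ℝ)) ∈ S := huniv ▸ mem_univ _
    exact this
  -- conclude the limits
  have hBlim : Tendsto θB atTop (nhds 1) := by
    have h1 : Tendsto (fun t : ℝ => 1 - (1-c) * Real.exp (-t)) atTop (nhds (1 - (1-c) * 0)) :=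
      tendsto_const_nhds.sub (tendsto_const_nhds.mul Real.tendsto_exp_neg_atTop_nhds_zero)
    rw [mul_zero, sub_zero] at h1
    refine h1.congr' ?_
    filter_upwards [eventually_ge_atTop (0:ℝ)] with t ht
    exact (hformulaB t (key t ht).1).symm
  have hRlim : Tendsto θR atTop (nhds 0) := by
    have h1 : Tendsto (fun t : ℝ => c * Real.exp (-t)) atTop (nhds (c * 0)) :=
      tendsto_const_nhds.mul Real.tendsto_exp_neg_atTop_nhds_zero
    rw [mul_zero] at h1
    refine h1.congr' ?_
    filter_upwards [eventually_ge_atTop (0:ℝ)] with t ht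
    exact (hformulaR t (key t ht).2).symm
  exact hBlim.prodMk_nhds hRlim
end

section
/- Consider the Watts–Strogatz mean-field system with inertia δ = 0. Suppose the Case-3 condition holds: p·(α+β)·(1−r) > α and p·(α+β)·r < α. Let c be a real number with 0 ≤ c < 1/2. Then every solution θ = (θ^B, θ^R) of the system on [0, ∞) with θ^B(0) = θ^R(0) = c satisfies θ(t) → (0, 1) as t → ∞ (party-line polarization, with the blue group fully adopting the initially more popular choice and the red group adopting the other choice). -/
open Set Filter

/-- Under the Case-3 condition p(α+β)(1−r) > α and p(α+β)r < α, with θ^B(0)=θ^R(0)=c and 0 ≤ c < 1/2, every solution on [0,∞) converges to the party-line polarized state (0,1). -/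
theorem ws_case3_polarization_low
    (α β p r : ℝ)
    (hα : α ∈ Set.Icc (0:ℝ) 1) (hβ : β ∈ Set.Icc (0:ℝ) 1)
    (hp : p ∈ Set.Icc (0:ℝ) 1) (hr : r ∈ Set.Ioo (0:ℝ) 1)
    (hcase1 : α < p * (α + β) * (1 - r)) (hcase2 : p * (α + β) * r < α)
    (c : ℝ) (hc1 : 0 ≤ c) (hc2 : c < 1 / 2)
    (θB θR : ℝ → ℝ)
    (hsol : IsWSSolutionOn α β p r θB θR (Set.Ici 0))
    (h0B : θB 0 = c) (h0R : θR 0 = c) :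
    Filter.Tendsto (fun t => (θB t, θR t)) Filter.atTop (nhds (((0:ℝ), (1:ℝ)))) := by
  obtain ⟨hα0, hα1⟩ := hα
  obtain ⟨hβ0, hβ1⟩ := hβ
  obtain ⟨hp0, hp1⟩ := hp
  obtain ⟨hr0, hr1⟩ := hr
  -- sign lemma
  have hsigns : ∀ x y : ℝ, x < 1/2 → x ≤ y →
      gB α β p r x y < 0 ∧ 0 < gR α β p r x y := by
    intro x y hx hxy
    constructor
    · have h1 : 0 < α - p * (α + β) * r := by linarith
      have h2 : (0:ℝ) ≤ β * p * r := by positivity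
      simp only [gB]
      nlinarith [mul_pos h1 (by linarith : (0:ℝ) < 1 - 2*x),
        mul_nonneg h2 (by linarith : (0:ℝ) ≤ 2*(y - x)),
        mul_nonneg h2 (by linarith : (0:ℝ) ≤ y - x)]
    · have h1 : 0 < p * (α + β) * (1 - r) - α := by linarith
      have h2 : (0:ℝ) ≤ α * (1 - p * (1 - r)) := by
        apply mul_nonneg hα0
        nlinarith
      simp only [gR]
      nlinarith [mul_pos h1 (by linarith : (0:ℝ) < 1 - 2*x),
        mul_nonneg h2 (by linarith : (0:ℝ) ≤ 2*(y - x)),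
        mul_nonneg h2 (by linarith : (0:ℝ) ≤ y - x)]
  -- continuity of solutions
  have hContB : ContinuousOn θB (Set.Ici 0) := fun t ht => (hsol t ht).1.continuousWithinAt
  have hContR : ContinuousOn θR (Set.Ici 0) := fun t ht => (hsol t ht).2.continuousWithinAt
  set Be : ℝ → ℝ := fun t => c * Real.exp (-t) with hBedef
  set Re : ℝ → ℝ := fun t => 1 - (1 - c) * Real.exp (-t) with hRedef
  have hBecont : Continuous Be :=
    continuous_const.mul (Real.continuous_exp.comp continuous_neg)
  have hRecont : Continuous Re :=
    continuous_const.sub (continuous_const.mul (Real.continuous_exp.comp continuous_neg))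
  -- the set where the solution agrees with the explicit formula
  set E : Set ℝ := {t | 0 ≤ t ∧ θB t = Be t ∧ θR t = Re t} with hEdef
  -- E is closed
  have hEclosed : IsClosed E := by
    have h1 : IsClosed (Set.Ici (0:ℝ) ∩ (fun t => θB t - Be t) ⁻¹' {0}) :=
      ContinuousOn.preimage_isClosed_of_isClosed
        (hContB.sub hBecont.continuousOn) isClosed_Ici isClosed_singleton
    have h2 : IsClosed (Set.Ici (0:ℝ) ∩ (fun t => θR t - Re t) ⁻¹' {0}) :=
      ContinuousOn.preimage_isClosed_of_isClosed
        (hContR.sub hRecont.continuousOn) isClosed_Ici isClosed_singleton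
    have : E = (Set.Ici (0:ℝ) ∩ (fun t => θB t - Be t) ⁻¹' {0}) ∩
        (Set.Ici (0:ℝ) ∩ (fun t => θR t - Re t) ⁻¹' {0}) := by
      ext t
      simp only [hEdef, Set.mem_setOf_eq, Set.mem_inter_iff, Set.mem_preimage,
        Set.mem_singleton_iff, Set.mem_Ici, sub_eq_zero]
      tauto
    rw [this]
    exact (h1.inter h2)
  -- properties of Be, Re on Ici 0
  have hBeRange : ∀ t : ℝ, 0 ≤ t → Be t < 1/2 ∧ Be t ≤ Re t := by
    intro t ht
    have he1 : Real.exp (-t) ≤ 1 := Real.exp_le_one_iff.mpr (by linarith)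
    have he0 : 0 < Real.exp (-t) := Real.exp_pos _
    constructor
    · simp only [hBedef]
      nlinarith
    · simp only [hBedef, hRedef]
      nlinarith
  -- main claim: E = everything
  have hmain : ∀ t : ℝ, 0 ≤ t → t ∈ E := by
    by_contra hcon
    push_neg at hcon
    obtain ⟨t0, ht0, ht0E⟩ := hcon
    set A : Set ℝ := {t | 0 ≤ t ∧ Set.Icc 0 t ⊆ E} with hAdef
    have h0A : (0:ℝ) ∈ A := by
      refine ⟨le_refl 0, ?_⟩
      intro s hs
      have hs0 : s = 0 := le_antisymm hs.2 hs.1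
      rw [hs0]
      refine ⟨le_refl 0, ?_, ?_⟩
      · simp [hBedef, h0B]
      · simp [hRedef, h0R]
    have hAne : A.Nonempty := ⟨0, h0A⟩
    have hAbd : BddAbove A := by
      refine ⟨t0, ?_⟩
      intro t ht
      by_contra hlt
      push_neg at hlt
      exact ht0E (ht.2 ⟨ht0, le_of_lt hlt⟩)
    set m : ℝ := sSup A with hmdef
    have hm0 : 0 ≤ m := le_csSup hAbd h0A
    have hIcoE : Set.Ico 0 m ⊆ E := by
      intro s hs
      obtain ⟨t, htA, hst⟩ := exists_lt_of_lt_csSup hAne hs.2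
      exact htA.2 ⟨hs.1, le_of_lt hst⟩
    have hmE : m ∈ E := by
      rcases eq_or_lt_of_le hm0 with h | h
      · rw [← h]; exact h0A.2 ⟨le_refl 0, le_refl 0⟩
      · have hcl : m ∈ closure (Set.Ico 0 m) := by
          rw [closure_Ico (ne_of_lt h)]
          exact ⟨hm0, le_refl m⟩
        exact hEclosed.closure_subset ((closure_mono hIcoE) hcl)
    have hmA : m ∈ A := by
      refine ⟨hm0, ?_⟩
      intro s hs
      rcases lt_or_eq_of_le hs.2 with h | h
      · exact hIcoE ⟨hs.1, h⟩
      · rw [h]; exact hmE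
    -- signs at m
    obtain ⟨_, hBm, hRm⟩ := hmE
    obtain ⟨hBlt, hBle⟩ := hBeRange m hm0
    have hsg := hsigns (θB m) (θR m) (by rw [hBm]; exact hBlt)
      (by rw [hBm, hRm]; exact hBle)
    -- continuity of g's along the trajectory
    have hmem : m ∈ Set.Ici (0:ℝ) := hm0
    have hBc : ContinuousWithinAt θB (Set.Ici 0) m := hContB m hmem
    have hRc : ContinuousWithinAt θR (Set.Ici 0) m := hContR m hmem
    have hgBc : ContinuousWithinAt (fun s => gB α β p r (θB s) (θR s)) (Set.Ici 0) m := by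
      simp only [gB]
      exact ((continuousWithinAt_const.mul
        ((continuousWithinAt_const.mul hBc).sub continuousWithinAt_const)).sub
        (continuousWithinAt_const.mul
        ((continuousWithinAt_const.mul hRc).sub continuousWithinAt_const)))
    have hgRc : ContinuousWithinAt (fun s => gR α β p r (θB s) (θR s)) (Set.Ici 0) m := by
      simp only [gR]
      exact ((continuousWithinAt_const.mul
        ((continuousWithinAt_const.mul hRc).sub continuousWithinAt_const)).sub
        (continuousWithinAt_const.mul
        ((continuousWithinAt_const.mul hBc).sub continuousWithinAt_const)))
    have hev : {s | gB α β p r (θB s) (θR s) < 0 ∧ 0 < gR α β p r (θB s) (θR s)}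
        ∈ nhdsWithin m (Set.Ici 0) := by
      have h1 := hgBc (Iio_mem_nhds hsg.1)
      have h2 := hgRc (Ioi_mem_nhds hsg.2)
      filter_upwards [h1, h2] with s hs1 hs2
      exact ⟨hs1, hs2⟩
    rw [Metric.mem_nhdsWithin_iff] at hev
    obtain ⟨ε, hεpos, hball⟩ := hev
    set b : ℝ := m + ε/2 with hbdef
    have hmb : m < b := by simp [hbdef]; linarith
    have hsignx : ∀ x ∈ Set.Icc m b,
        gB α β p r (θB x) (θR x) < 0 ∧ 0 < gR α β p r (θB x) (θR x) := by
      intro x hx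
      apply hball
      constructor
      · rw [Metric.mem_ball, Real.dist_eq, abs_of_nonneg (by linarith [hx.1])]
        have := hx.2
        simp only [hbdef] at this
        linarith
      · exact le_trans hm0 hx.1
    -- derivative zero for θB * exp
    have hderB : ∀ x ∈ Set.Ico m b,
        HasDerivWithinAt (fun s => θB s * Real.exp s) 0 (Set.Ici x) x := by
      intro x hx
      have hx0 : (0:ℝ) ≤ x := le_trans hm0 hx.1
      have hgx := hsignx x ⟨hx.1, le_of_lt hx.2⟩
      have hd := (hsol x hx0).1.mono (Set.Ici_subset_Ici.mpr hx0)
      have hrhs : rhsB α β p r (θB x) (θR x) = -θB x := by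
        rw [rhsB, if_neg (not_lt.mpr (le_of_lt hgx.1)), if_pos hgx.1]
        ring
      rw [hrhs] at hd
      have hexp : HasDerivWithinAt Real.exp (Real.exp x) (Set.Ici x) x :=
        (Real.hasDerivAt_exp x).hasDerivWithinAt
      have : HasDerivWithinAt (fun s => θB s * Real.exp s) (-θB x * Real.exp x + θB x * Real.exp x) (Set.Ici x) x := hd.mul hexp
      convert this using 1
      ring
    have hderR : ∀ x ∈ Set.Ico m b,
        HasDerivWithinAt (fun s => (θR s - 1) * Real.exp s) 0 (Set.Ici x) x := by
      intro x hx
      have hx0 : (0:ℝ) ≤ x := le_trans hm0 hx.1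
      have hgx := hsignx x ⟨hx.1, le_of_lt hx.2⟩
      have hd := (hsol x hx0).2.mono (Set.Ici_subset_Ici.mpr hx0)
      have hrhs : rhsR α β p r (θB x) (θR x) = 1 - θR x := by
        rw [rhsR, if_pos hgx.2, if_neg (not_lt.mpr (le_of_lt hgx.2))]
        ring
      rw [hrhs] at hd
      have hd' : HasDerivWithinAt (fun s => θR s - 1) (1 - θR x) (Set.Ici x) x :=
        hd.sub_const 1
      have hexp : HasDerivWithinAt Real.exp (Real.exp x) (Set.Ici x) x :=
        (Real.hasDerivAt_exp x).hasDerivWithinAt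
      have : HasDerivWithinAt (fun s => (θR s - 1) * Real.exp s) ((1 - θR x) * Real.exp x + (θR x - 1) * Real.exp x) (Set.Ici x) x := hd'.mul hexp
      convert this using 1
      ring
    have hIccIci : Set.Icc m b ⊆ Set.Ici (0:ℝ) := fun x hx => le_trans hm0 hx.1
    have hconstB := constant_of_has_deriv_right_zero
      ((hContB.mono hIccIci).mul Real.continuous_exp.continuousOn) hderB
    have hconstR := constant_of_has_deriv_right_zero
      (((hContR.mono hIccIci).sub continuousOn_const).mul Real.continuous_exp.continuousOn) hderR
    have hbA : b ∈ A := by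
      refine ⟨by linarith, ?_⟩
      intro s hs
      rcases le_or_gt s m with h | h
      · exact hmA.2 ⟨hs.1, h⟩
      · have hsIcc : s ∈ Set.Icc m b := ⟨le_of_lt h, hs.2⟩
        have hs0 : (0:ℝ) ≤ s := hs.1
        have hB : θB s * Real.exp s = θB m * Real.exp m := hconstB s hsIcc
        have hR : (θR s - 1) * Real.exp s = (θR m - 1) * Real.exp m := hconstR s hsIcc
        have hexps : Real.exp s ≠ 0 := Real.exp_ne_zero s
        have hexpm : Real.exp m ≠ 0 := Real.exp_ne_zero m
        refine ⟨hs0, ?_, ?_⟩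
        · have hBs : θB s * Real.exp s = c := by
            rw [hB, hBm]
            simp only [hBedef]
            rw [Real.exp_neg]
            field_simp
          simp only [hBedef]
          rw [Real.exp_neg]
          rw [eq_comm, mul_inv_eq_iff_eq_mul₀ (Real.exp_ne_zero s), eq_comm]
          linarith [hBs]
        · have hRs : (θR s - 1) * Real.exp s = -(1-c) := by
            rw [hR, hRm]
            simp only [hRedef]
            rw [Real.exp_neg]
            field_simp
            ring
          have h4 : θR s - 1 = -(1-c) * (Real.exp s)⁻¹ := by
            rw [eq_comm, mul_inv_eq_iff_eq_mul₀ (Real.exp_ne_zero s), eq_comm]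
            linarith [hRs]
          simp only [hRedef]
          rw [Real.exp_neg]
          linear_combination h4
    have : b ≤ m := le_csSup hAbd hbA
    linarith
  -- conclude the limit
  have hBlim : Filter.Tendsto θB Filter.atTop (nhds 0) := by
    have h1 : Filter.Tendsto Be Filter.atTop (nhds 0) := by
      have := Real.tendsto_exp_neg_atTop_nhds_zero.const_mul c
      simpa using this
    apply h1.congr'
    filter_upwards [Filter.eventually_ge_atTop (0:ℝ)] with t ht
    exact ((hmain t ht).2.1).symm
  have hRlim : Filter.Tendsto θR Filter.atTop (nhds 1) := by
    have h1 : Filter.Tendsto Re Filter.atTop (nhds 1) := by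
      have := Real.tendsto_exp_neg_atTop_nhds_zero.const_mul (1-c)
      have h2 := (tendsto_const_nhds (x := (1:ℝ)) (f := Filter.atTop)).sub this
      simpa using h2
    apply h1.congr'
    filter_upwards [Filter.eventually_ge_atTop (0:ℝ)] with t ht
    exact ((hmain t ht).2.2).symm
  exact hBlim.prodMk_nhds hRlim
end

section
/- Consider the Watts–Strogatz mean-field system with inertia δ = 0. Suppose the Case-4 condition p·(α+β)·min{r, 1−r} > α holds, and let c be a real number with 1/2 < c < 1. Then the function θ(t) = (c·e^{−t}, c·e^{−t}) is a solution of the system on the interval [0, ln(2c)) with θ^B(0) = θ^R(0) = c, and θ(t) → (1/2, 1/2) as t → ln(2c) from the left (non-partisan polarization, with each group approaching an equal split between the two choices). -/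
open Set Filter

/-- Under the Case-4 condition `p(α+β)min{r,1−r} > α` and `1/2 < c < 1`,
`θ(t) = (c·e^{−t}, c·e^{−t})` solves the system on `[0, ln(2c))` with `θ^B(0) = θ^R(0) = c`,
and `θ(t) → (1/2, 1/2)` as `t → ln(2c)⁻` (non-partisan polarization). -/
theorem ws_case4_trajectory_high
    (α β p r : ℝ)
    (hα : α ∈ Set.Icc (0:ℝ) 1) (hβ : β ∈ Set.Icc (0:ℝ) 1)
    (hp : p ∈ Set.Icc (0:ℝ) 1) (hr : r ∈ Set.Ioo (0:ℝ) 1)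
    (hcase : α < p * (α + β) * min r (1 - r))
    (c : ℝ) (hc1 : 1 / 2 < c) (hc2 : c < 1) :
    IsWSSolutionOn α β p r (fun t => c * Real.exp (-t)) (fun t => c * Real.exp (-t))
      (Set.Ico 0 (Real.log (2 * c))) ∧
    c * Real.exp (-(0:ℝ)) = c ∧
    Filter.Tendsto (fun t => (c * Real.exp (-t), c * Real.exp (-t)))
      (nhdsWithin (Real.log (2 * c)) (Set.Iio (Real.log (2 * c))))
      (nhds ((1 / 2 : ℝ), (1 / 2 : ℝ))) := by

  have hc0 : (0:ℝ) < c := lt_trans (by norm_num) hc1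
  have h2c : (1:ℝ) < 2 * c := by linarith
  -- main facts about the common coefficient negativity
  have hminr : p * (α + β) * min r (1 - r) ≤ p * (α + β) * r := by
    apply mul_le_mul_of_nonneg_left (min_le_left _ _)
    have := hα.1; have := hβ.1; have := hp.1; positivity
  have hmin1r : p * (α + β) * min r (1 - r) ≤ p * (α + β) * (1 - r) := by
    apply mul_le_mul_of_nonneg_left (min_le_right _ _)
    have := hα.1; have := hβ.1; have := hp.1; positivity
  have hB : α < p * (α + β) * r := lt_of_lt_of_le hcase hminr
  have hR : α < p * (α + β) * (1 - r) := lt_of_lt_of_le hcase hmin1r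
  refine ⟨?_, by simp, ?_⟩
  · intro t ht
    have hθ : (1:ℝ)/2 < c * Real.exp (-t) := by
      have : Real.exp (Real.log (2 * c)) = 2 * c :=
        Real.exp_log (by linarith)
      have h1 : Real.exp (-Real.log (2 * c)) < Real.exp (-t) := by
        apply Real.exp_lt_exp.2; linarith [ht.2]
      have h2 : Real.exp (-Real.log (2 * c)) = 1 / (2 * c) := by
        rw [Real.exp_neg, this, one_div]
      rw [h2] at h1
      have := (div_lt_iff₀ (by linarith : (0:ℝ) < 2 * c)).1 h1
      nlinarith [Real.exp_pos (-t)]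
    set θ := c * Real.exp (-t) with hθdef
    have h2θ : 0 < 2 * θ - 1 := by linarith
    have hgB : gB α β p r θ θ < 0 := by
      have : gB α β p r θ θ = (2 * θ - 1) * (α - p * r * (α + β)) := by
        unfold gB; ring
      rw [this]
      apply mul_neg_of_pos_of_neg h2θ
      nlinarith
    have hgR : gR α β p r θ θ < 0 := by
      have : gR α β p r θ θ = (2 * θ - 1) * (α - p * (1 - r) * (α + β)) := by
        unfold gR; ring
      rw [this]
      apply mul_neg_of_pos_of_neg h2θ
      nlinarith
    have hderiv : HasDerivAt (fun t => c * Real.exp (-t)) (-(c * Real.exp (-t))) t := by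
      have h1 : HasDerivAt (fun t : ℝ => Real.exp (-t)) (Real.exp (-t) * (-1)) t :=
        (Real.hasDerivAt_exp (-t)).comp t (hasDerivAt_neg t)
      have := h1.const_mul c
      rw [show -(c * Real.exp (-t)) = c * (Real.exp (-t) * (-1)) by ring]; exact this
    have hrB : rhsB α β p r θ θ = -(c * Real.exp (-t)) := by
      unfold rhsB
      rw [if_neg (by linarith), if_pos hgB, hθdef]; ring
    have hrR : rhsR α β p r θ θ = -(c * Real.exp (-t)) := by
      unfold rhsR
      rw [if_neg (by linarith), if_pos hgR, hθdef]; ring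
    exact ⟨hrB ▸ hderiv.hasDerivWithinAt, hrR ▸ hderiv.hasDerivWithinAt⟩
  · have hcont : Filter.Tendsto (fun t => c * Real.exp (-t))
        (nhds (Real.log (2 * c))) (nhds (1/2 : ℝ)) := by
      have : Filter.Tendsto (fun t => c * Real.exp (-t))
          (nhds (Real.log (2 * c))) (nhds (c * Real.exp (-Real.log (2 * c)))) := by
        exact ((continuous_const.mul (Real.continuous_exp.comp continuous_neg)).tendsto _)
      convert this using 2
      rw [Real.exp_neg, Real.exp_log (by linarith)]
      field_simp
    have h := hcont.mono_left (nhdsWithin_le_nhds (s := Set.Iio (Real.log (2 * c))))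
    exact h.prodMk_nhds h
end

section
/- Consider the Watts–Strogatz mean-field system with inertia δ = 0. Suppose the Case-4 condition p·(α+β)·min{r, 1−r} > α holds, and let c be a real number with 0 < c < 1/2. Then the function θ(t) = (1−(1−c)e^{−t}, 1−(1−c)e^{−t}) is a solution of the system on the interval [0, ln(2(1−c))) with θ^B(0) = θ^R(0) = c, and θ(t) → (1/2, 1/2) as t → ln(2(1−c)) from the left (non-partisan polarization, with each group approaching an equal split between the two choices). -/
open Set Filter

/-- Under the Case-4 condition `p(α+β)min{r,1−r} > α` and `0 < c < 1/2`,
`θ(t) = (1−(1−c)e^{−t}, 1−(1−c)e^{−t})` solves the system on `[0, ln(2(1−c)))` with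
`θ^B(0) = θ^R(0) = c`, and `θ(t) → (1/2, 1/2)` as `t → ln(2(1−c))⁻`
(non-partisan polarization). -/
theorem ws_case4_trajectory_low
    (α β p r : ℝ)
    (hα : α ∈ Set.Icc (0:ℝ) 1) (hβ : β ∈ Set.Icc (0:ℝ) 1)
    (hp : p ∈ Set.Icc (0:ℝ) 1) (hr : r ∈ Set.Ioo (0:ℝ) 1)
    (hcase : α < p * (α + β) * min r (1 - r))
    (c : ℝ) (hc1 : 0 < c) (hc2 : c < 1 / 2) :
    IsWSSolutionOn α β p r (fun t => 1 - (1 - c) * Real.exp (-t))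
      (fun t => 1 - (1 - c) * Real.exp (-t))
      (Set.Ico 0 (Real.log (2 * (1 - c)))) ∧
    1 - (1 - c) * Real.exp (-(0:ℝ)) = c ∧
    Filter.Tendsto (fun t => (1 - (1 - c) * Real.exp (-t), 1 - (1 - c) * Real.exp (-t)))
      (nhdsWithin (Real.log (2 * (1 - c))) (Set.Iio (Real.log (2 * (1 - c)))))
      (nhds ((1 / 2 : ℝ), (1 / 2 : ℝ))) := by
  obtain ⟨hα0, hα1⟩ := hα
  obtain ⟨hβ0, hβ1⟩ := hβ
  obtain ⟨hp0, hp1⟩ := hp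
  obtain ⟨hr0, hr1⟩ := hr
  have h1c : (0:ℝ) < 1 - c := by linarith
  have h2c : (0:ℝ) < 2 * (1 - c) := by linarith
  have hpab : 0 ≤ p * (α + β) := by positivity
  have hminr : min r (1 - r) ≤ r := min_le_left _ _
  have hmin1r : min r (1 - r) ≤ 1 - r := min_le_right _ _
  have hcoefB : α * (1 - p * r) - β * p * r < 0 := by
    nlinarith [mul_le_mul_of_nonneg_left hminr hpab]
  have hcoefR : α * (1 - p * (1 - r)) - β * (1 - r) * p < 0 := by
    nlinarith [mul_le_mul_of_nonneg_left hmin1r hpab]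
  refine ⟨?_, by simp, ?_⟩
  · intro t ht
    obtain ⟨ht0, htL⟩ := ht
    have hlt : 1 - (1 - c) * Real.exp (-t) < 1 / 2 := by
      have : Real.exp (-Real.log (2 * (1 - c))) < Real.exp (-t) :=
        Real.exp_lt_exp.2 (by linarith)
      rw [Real.exp_neg, Real.exp_log h2c] at this
      have h3 : (2 * (1 - c))⁻¹ * (1 - c) < Real.exp (-t) * (1 - c) := by
        exact mul_lt_mul_of_pos_right this h1c
      have h4 : (2 * (1 - c))⁻¹ * (1 - c) = 1 / 2 := by
        field_simp
      nlinarith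
    set θ := 1 - (1 - c) * Real.exp (-t) with hθ
    have hθneg : 2 * θ - 1 < 0 := by linarith
    have hgB : 0 < gB α β p r θ θ := by
      have : gB α β p r θ θ = (α * (1 - p * r) - β * p * r) * (2 * θ - 1) := by
        simp [gB]; ring
      rw [this]
      exact mul_pos_of_neg_of_neg hcoefB hθneg
    have hgR : 0 < gR α β p r θ θ := by
      have : gR α β p r θ θ = (α * (1 - p * (1 - r)) - β * (1 - r) * p) * (2 * θ - 1) := by
        simp [gR]; ring
      rw [this]
      exact mul_pos_of_neg_of_neg hcoefR hθneg
    have hrhsB : rhsB α β p r θ θ = (1 - c) * Real.exp (-t) := by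
      rw [rhsB, if_pos hgB, if_neg (not_lt.2 hgB.le)]
      simp [hθ]
    have hrhsR : rhsR α β p r θ θ = (1 - c) * Real.exp (-t) := by
      rw [rhsR, if_pos hgR, if_neg (not_lt.2 hgR.le)]
      simp [hθ]
    have hderiv : HasDerivAt (fun t => 1 - (1 - c) * Real.exp (-t))
        ((1 - c) * Real.exp (-t)) t := by
      have h1 : HasDerivAt (fun t : ℝ => Real.exp (-t)) (-Real.exp (-t)) t := by
        have h := (Real.hasDerivAt_exp (-t)).comp t (hasDerivAt_neg t)
        simp only [mul_neg, mul_one] at h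
        exact h
      have h2 := (h1.const_mul (1 - c)).const_sub 1
      simpa using h2
    exact ⟨hrhsB ▸ hderiv.hasDerivWithinAt, hrhsR ▸ hderiv.hasDerivWithinAt⟩
  · have hcont : Continuous (fun t : ℝ => (1 - (1 - c) * Real.exp (-t),
        1 - (1 - c) * Real.exp (-t))) := by
      apply Continuous.prodMk <;> continuity
    have hval : 1 - (1 - c) * Real.exp (-Real.log (2 * (1 - c))) = 1 / 2 := by
      rw [Real.exp_neg, Real.exp_log h2c]
      field_simp; ring
    have := (hcont.tendsto (Real.log (2 * (1 - c)))).mono_left (nhdsWithin_le_nhds (s := Set.Iio (Real.log (2 * (1 - c)))))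
    rwa [hval] at this
end

section
/- Consider the Watts–Strogatz mean-field system with inertia δ = 0 and suppose the Case-1 condition p·(α+β)·max{r, 1−r} < α holds. For every real c with 1/2 < c ≤ 1, the function θ(t) = (1−(1−c)e^{−t}, 1−(1−c)e^{−t}) is a solution of the system on [0, ∞) with θ^B(0) = θ^R(0) = c; that is, along this trajectory both indicator conditions g^B(θ(t)) > 0 and g^R(θ(t)) > 0 hold for all t ≥ 0 and both coordinates satisfy θ' = 1 − θ. -/
open Set Filter

/-- Under the Case-1 condition `p(α+β)max{r,1−r} < α` and `1/2 < c ≤ 1`,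
the function `θ(t) = (1−(1−c)e^{−t}, 1−(1−c)e^{−t})` is a solution of the system on
`[0,∞)` with `θ^B(0) = θ^R(0) = c`; along this trajectory both indicator conditions
`g^B(θ(t)) > 0` and `g^R(θ(t)) > 0` hold for all `t ≥ 0` and both coordinates satisfy
`θ' = 1 − θ`. -/
theorem ws_case1_explicit_trajectory_high
    (α β p r : ℝ)
    (hα : α ∈ Set.Icc (0:ℝ) 1) (hβ : β ∈ Set.Icc (0:ℝ) 1)
    (hp : p ∈ Set.Icc (0:ℝ) 1) (hr : r ∈ Set.Ioo (0:ℝ) 1)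
    (hcase : p * (α + β) * max r (1 - r) < α)
    (c : ℝ) (hc1 : 1 / 2 < c) (hc2 : c ≤ 1) :
    (1 - (1 - c) * Real.exp (-(0:ℝ)) = c) ∧
    IsWSSolutionOn α β p r (fun t => 1 - (1 - c) * Real.exp (-t))
      (fun t => 1 - (1 - c) * Real.exp (-t)) (Set.Ici 0) ∧
    ∀ t ∈ Set.Ici (0:ℝ),
      0 < gB α β p r (1 - (1 - c) * Real.exp (-t)) (1 - (1 - c) * Real.exp (-t)) ∧
      0 < gR α β p r (1 - (1 - c) * Real.exp (-t)) (1 - (1 - c) * Real.exp (-t)) ∧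
      HasDerivWithinAt (fun t => 1 - (1 - c) * Real.exp (-t))
        (1 - (1 - (1 - c) * Real.exp (-t))) (Set.Ici 0) t := by
  obtain ⟨hα0, hα1⟩ := hα
  obtain ⟨hβ0, hβ1⟩ := hβ
  obtain ⟨hp0, hp1⟩ := hp
  obtain ⟨hr0, hr1⟩ := hr
  -- θ(t) > 1/2 for t ≥ 0
  have hθ : ∀ t : ℝ, 0 ≤ t → 1 / 2 < 1 - (1 - c) * Real.exp (-t) := by
    intro t ht
    have h1 : (1 - c) * Real.exp (-t) ≤ (1 - c) * 1 :=
      mul_le_mul_of_nonneg_left (Real.exp_le_one_iff.2 (by linarith)) (by linarith)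
    nlinarith
  have hcoefB : 0 < α * (1 - p * r) - β * p * r := by
    have h1 : p * (α + β) * r ≤ p * (α + β) * max r (1 - r) :=
      mul_le_mul_of_nonneg_left (le_max_left _ _) (by positivity)
    nlinarith
  have hcoefR : 0 < α * (1 - p * (1 - r)) - β * (1 - r) * p := by
    have h1 : p * (α + β) * (1 - r) ≤ p * (α + β) * max r (1 - r) :=
      mul_le_mul_of_nonneg_left (le_max_right _ _) (by positivity)
    nlinarith
  have hgB : ∀ t : ℝ, 0 ≤ t →
      0 < gB α β p r (1 - (1 - c) * Real.exp (-t)) (1 - (1 - c) * Real.exp (-t)) := by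
    intro t ht
    have h := hθ t ht
    unfold gB
    nlinarith
  have hgR : ∀ t : ℝ, 0 ≤ t →
      0 < gR α β p r (1 - (1 - c) * Real.exp (-t)) (1 - (1 - c) * Real.exp (-t)) := by
    intro t ht
    have h := hθ t ht
    unfold gR
    nlinarith
  have hderiv : ∀ t : ℝ, HasDerivAt (fun t => 1 - (1 - c) * Real.exp (-t))
      (1 - (1 - (1 - c) * Real.exp (-t))) t := by
    intro t
    have h1 : HasDerivAt (fun t : ℝ => Real.exp (-t)) (-Real.exp (-t)) t := by
      simpa [Function.comp_def] using ((Real.hasDerivAt_exp (-t)).comp t (hasDerivAt_neg t))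
    have h2 := ((h1.const_mul (1 - c)).const_sub 1)
    exact h2.congr_deriv (by ring)
  refine ⟨by simp, ?_, ?_⟩
  · intro t ht
    have ht' : (0:ℝ) ≤ t := ht
    have hB := hgB t ht'
    have hR := hgR t ht'
    constructor
    · have : rhsB α β p r (1 - (1 - c) * Real.exp (-t)) (1 - (1 - c) * Real.exp (-t))
          = 1 - (1 - (1 - c) * Real.exp (-t)) := by
        unfold rhsB
        rw [if_pos hB, if_neg (by linarith)]
        ring
      rw [this]
      exact (hderiv t).hasDerivWithinAt
    · have : rhsR α β p r (1 - (1 - c) * Real.exp (-t)) (1 - (1 - c) * Real.exp (-t))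
          = 1 - (1 - (1 - c) * Real.exp (-t)) := by
        unfold rhsR
        rw [if_pos hR, if_neg (by linarith)]
        ring
      rw [this]
      exact (hderiv t).hasDerivWithinAt
  · intro t ht
    exact ⟨hgB t ht, hgR t ht, (hderiv t).hasDerivWithinAt⟩
end

section
/- Consider the Watts–Strogatz mean-field system with inertia δ = 0 and suppose the Case-1 condition p·(α+β)·max{r, 1−r} < α holds. For every real c with 0 ≤ c < 1/2, the function θ(t) = (c·e^{−t}, c·e^{−t}) is a solution of the system on [0, ∞) with θ^B(0) = θ^R(0) = c; that is, along this trajectory both indicator conditions g^B(θ(t)) < 0 and g^R(θ(t)) < 0 hold for all t ≥ 0 and both coordinates satisfy θ' = −θ. -/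
open Set Filter

/-- Under the Case-1 condition `p(α+β)max{r,1−r} < α` and `0 ≤ c < 1/2`,
the function `θ(t) = (c·e^{−t}, c·e^{−t})` is a solution of the system on `[0,∞)` with
`θ^B(0) = θ^R(0) = c`; along this trajectory both indicator conditions `g^B(θ(t)) < 0`
and `g^R(θ(t)) < 0` hold for all `t ≥ 0` and both coordinates satisfy `θ' = −θ`. -/
theorem ws_case1_explicit_trajectory_low
    (α β p r : ℝ)
    (hα : α ∈ Set.Icc (0:ℝ) 1) (hβ : β ∈ Set.Icc (0:ℝ) 1)
    (hp : p ∈ Set.Icc (0:ℝ) 1) (hr : r ∈ Set.Ioo (0:ℝ) 1)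
    (hcase : p * (α + β) * max r (1 - r) < α)
    (c : ℝ) (hc1 : 0 ≤ c) (hc2 : c < 1 / 2) :
    (c * Real.exp (-(0:ℝ)) = c) ∧
    IsWSSolutionOn α β p r (fun t => c * Real.exp (-t))
      (fun t => c * Real.exp (-t)) (Set.Ici 0) ∧
    ∀ t ∈ Set.Ici (0:ℝ),
      gB α β p r (c * Real.exp (-t)) (c * Real.exp (-t)) < 0 ∧
      gR α β p r (c * Real.exp (-t)) (c * Real.exp (-t)) < 0 ∧
      HasDerivWithinAt (fun t => c * Real.exp (-t))
        (-(c * Real.exp (-t))) (Set.Ici 0) t := by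

  -- preliminary facts
  obtain ⟨hα0, hα1⟩ := hα
  obtain ⟨hβ0, hβ1⟩ := hβ
  obtain ⟨hp0, hp1⟩ := hp
  obtain ⟨hr0, hr1⟩ := hr
  have hcoefB : 0 < α - p * r * (α + β) := by
    have h1 : p * (α + β) * r ≤ p * (α + β) * max r (1 - r) := by
      apply mul_le_mul_of_nonneg_left (le_max_left _ _)
      positivity
    nlinarith
  have hcoefR : 0 < α - p * (1 - r) * (α + β) := by
    have h1 : p * (α + β) * (1 - r) ≤ p * (α + β) * max r (1 - r) := by
      apply mul_le_mul_of_nonneg_left (le_max_right _ _)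
      positivity
    nlinarith
  have hx : ∀ t : ℝ, 0 ≤ t → 2 * (c * Real.exp (-t)) - 1 < 0 := by
    intro t ht
    have h1 : Real.exp (-t) ≤ 1 := Real.exp_le_one_iff.mpr (by linarith)
    have h2 : c * Real.exp (-t) ≤ c * 1 :=
      mul_le_mul_of_nonneg_left h1 hc1
    nlinarith
  have hgB : ∀ t : ℝ, 0 ≤ t →
      gB α β p r (c * Real.exp (-t)) (c * Real.exp (-t)) < 0 := by
    intro t ht
    have := hx t ht
    unfold gB
    nlinarith [hcoefB, this]
  have hgR : ∀ t : ℝ, 0 ≤ t →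
      gR α β p r (c * Real.exp (-t)) (c * Real.exp (-t)) < 0 := by
    intro t ht
    have := hx t ht
    unfold gR
    nlinarith [hcoefR, this]
  have hderiv : ∀ t : ℝ, HasDerivAt (fun t => c * Real.exp (-t))
      (-(c * Real.exp (-t))) t := by
    intro t
    have h1 : HasDerivAt (fun t : ℝ => Real.exp (-t)) (Real.exp (-t) * (-1)) t :=
      (Real.hasDerivAt_exp (-t)).comp t ((hasDerivAt_id t).neg)
    have h2 := h1.const_mul c
    exact h2.congr_deriv (by ring)
  refine ⟨by simp, ?_, ?_⟩
  · intro t ht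
    have htt : (0:ℝ) ≤ t := ht
    have hB := hgB t htt
    have hR := hgR t htt
    constructor
    · have : rhsB α β p r (c * Real.exp (-t)) (c * Real.exp (-t))
          = -(c * Real.exp (-t)) := by
        unfold rhsB
        rw [if_neg (by linarith), if_pos hB]
        ring
      rw [this]
      exact (hderiv t).hasDerivWithinAt
    · have : rhsR α β p r (c * Real.exp (-t)) (c * Real.exp (-t))
          = -(c * Real.exp (-t)) := by
        unfold rhsR
        rw [if_neg (by linarith), if_pos hR]
        ring
      rw [this]
      exact (hderiv t).hasDerivWithinAt
  · intro t ht
    exact ⟨hgB t ht, hgR t ht, (hderiv t).hasDerivWithinAt⟩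
end
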